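/- arXiv:1106.0769 — 3 statements merged into one kernel-verified Lean document; each statement's English description precedes it below -/
import Mathlib

section
/- Let A be a symmetric n×n real matrix with nonnegative entries and zero diagonal (a weighted graph G), with degrees d_i = Σ_j a_{ij} ordered so that d_1 ≤ d_2 ≤ … ≤ d_n, and Laplacian L = D − A. For 1 ≤ m ≤ n, let Δ(G_{l_m}) = max_{m ≤ i ≤ n} Σ_{m ≤ j ≤ n} a_{ij} be the maximum degree of the subgraph induced on the n−m+1 vertices of largest degree. Then the m-th smallest eigenvalue of L satisfies λ_m(G) ≥ d_m − Δ(G_{l_m}). -/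
open Polynomial Matrix in
lemma aux_charpoly_conj {n : ℕ} (U D : Matrix (Fin n) (Fin n) ℝ)
    (h1 : U * star U = 1) (h2 : star U * U = 1) :
    (U * D * star U).charpoly = D.charpoly := by
  have hone : U.map (C : ℝ →+* ℝ[X]) * (star U).map C = 1 := by
    rw [← Matrix.map_mul, h1, Matrix.map_one _ (map_zero C) (map_one C)]
  have hone2 : (star U).map (C : ℝ →+* ℝ[X]) * U.map C = 1 := by
    rw [← Matrix.map_mul, h2, Matrix.map_one _ (map_zero C) (map_one C)]
  have hch : charmatrix (U * D * star U)
      = U.map C * charmatrix D * (star U).map C := by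
    rw [charmatrix, charmatrix]
    rw [Matrix.mul_sub, Matrix.sub_mul]
    congr 1
    · rw [mul_assoc, (Matrix.scalar_commute (X : ℝ[X]) (Commute.all _) _).eq, ← mul_assoc, hone,
        one_mul]
    · simp only [RingHom.mapMatrix_apply]
      rw [Matrix.map_mul, Matrix.map_mul, mul_assoc]
  rw [Matrix.charpoly, Matrix.charpoly, hch, Matrix.det_mul, Matrix.det_mul,
    mul_comm, ← mul_assoc, ← Matrix.det_mul, hone2, Matrix.det_one, one_mul]

open Polynomial Matrix in
lemma aux_roots_eq {n : ℕ} {L : Matrix (Fin n) (Fin n) ℝ} (hL : L.IsHermitian) :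
    L.charpoly.roots = Finset.univ.val.map hL.eigenvalues := by
  have hU := hL.eigenvectorUnitary.2
  rw [Matrix.mem_unitaryGroup_iff'] at hU
  have hU2 := hL.eigenvectorUnitary.2
  rw [Matrix.mem_unitaryGroup_iff] at hU2
  have hdiag : Matrix.diagonal ((RCLike.ofReal : ℝ → ℝ) ∘ hL.eigenvalues)
      = Matrix.diagonal hL.eigenvalues := by
    congr 1
  have hcp : L.charpoly = (Matrix.diagonal hL.eigenvalues).charpoly := by
    conv_lhs => rw [hL.spectral_theorem]
    rw [hdiag]
    exact aux_charpoly_conj _ _ hU2 hU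
  rw [hcp]
  rw [Matrix.charpoly_of_upperTriangular _ (Matrix.blockTriangular_diagonal _)]
  have : ∀ i : Fin n, (X - C (Matrix.diagonal hL.eigenvalues i i))
      = X - C (hL.eigenvalues i) := by intro i; rw [Matrix.diagonal_apply_eq]
  simp_rw [this]
  rw [show (∏ i : Fin n, (X - C (hL.eigenvalues i)))
      = ((Finset.univ.val.map hL.eigenvalues).map (fun a => X - C a)).prod by
    rw [Multiset.map_map]; rfl]
  exact roots_multiset_prod_X_sub_C _

open Matrix in
lemma aux_sum_dot {n : ℕ} {ι : Type*} (s : Finset ι) (f : ι → (Fin n → ℝ)) (w : Fin n → ℝ) :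
    (∑ i ∈ s, f i) ⬝ᵥ w = ∑ i ∈ s, (f i ⬝ᵥ w) := by
  simp only [dotProduct, Finset.sum_apply, Finset.sum_mul]
  exact Finset.sum_comm

open Matrix in
lemma aux_dot_sum {n : ℕ} {ι : Type*} (s : Finset ι) (w : Fin n → ℝ) (f : ι → (Fin n → ℝ)) :
    w ⬝ᵥ (∑ i ∈ s, f i) = ∑ i ∈ s, (w ⬝ᵥ f i) := by
  simp only [dotProduct, Finset.sum_apply, Finset.mul_sum]
  exact Finset.sum_comm

open Matrix in
lemma aux_card_bound {n : ℕ} {L : Matrix (Fin n) (Fin n) ℝ} (hL : L.IsHermitian)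
    (F : Finset (Fin n)) (c : ℝ)
    (hQ : ∀ x : Fin n → ℝ, (∀ j, j ∉ F → x j = 0) → c * (x ⬝ᵥ x) ≤ x ⬝ᵥ (L *ᵥ x)) :
    (Finset.univ.filter fun i => hL.eigenvalues i < c).card + F.card ≤ n := by
  classical
  by_contra hcon
  push_neg at hcon
  set μ := hL.eigenvalues with hμ
  set b := hL.eigenvectorBasis with hb
  set T := Finset.univ.filter fun i => μ i < c with hT
  -- dot products of eigenbasis
  have hbij : ∀ i j : Fin n, ⇑(b i) ⬝ᵥ ⇑(b j) = if i = j then (1:ℝ) else 0 := by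
    intro i j
    have h := orthonormal_iff_ite.mp b.orthonormal i j
    rw [PiLp.inner_apply] at h
    simpa [dotProduct, mul_comm] using h
  -- linear independence of restricted eigenbasis in plain function space
  have hliT : LinearIndependent ℝ (fun i : T => ⇑(b (i : Fin n))) := by
    rw [Fintype.linearIndependent_iff]
    intro g hg j
    have h2 := congrArg (fun v => ⇑(b (j : Fin n)) ⬝ᵥ v) hg
    simp only [aux_dot_sum, dotProduct_smul, hbij, smul_eq_mul,
      dotProduct_zero, mul_ite, mul_one, mul_zero, Subtype.val_inj] at h2
    rw [Finset.sum_ite_eq] at h2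
    simpa using h2
  have hliF : LinearIndependent ℝ (fun i : F => Pi.basisFun ℝ (Fin n) (i : Fin n)) :=
    (Pi.basisFun ℝ (Fin n)).linearIndependent.comp _ Subtype.val_injective
  set W : Submodule ℝ (Fin n → ℝ) := Submodule.span ℝ (Set.range fun i : T => ⇑(b (i : Fin n)))
  set Uu : Submodule ℝ (Fin n → ℝ) :=
    Submodule.span ℝ (Set.range fun i : F => Pi.basisFun ℝ (Fin n) (i : Fin n))
  have hWrank : Module.finrank ℝ W = T.card := by
    rw [finrank_span_eq_card hliT, Fintype.card_coe]
  have hUrank : Module.finrank ℝ Uu = F.card := by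
    rw [finrank_span_eq_card hliF, Fintype.card_coe]
  have hsum := Submodule.finrank_sup_add_finrank_inf_eq W Uu
  have hle : Module.finrank ℝ ↥(W ⊔ Uu) ≤ n := by
    have := Submodule.finrank_le (W ⊔ Uu)
    rwa [Module.finrank_fin_fun] at this
  have hpos : 0 < Module.finrank ℝ ↥(W ⊓ Uu) := by omega
  obtain ⟨⟨x, hxmem⟩, hx0⟩ := Module.finrank_pos_iff_exists_ne_zero.mp hpos
  obtain ⟨hxW, hxU⟩ := Submodule.mem_inf.mp hxmem
  have hxne : x ≠ 0 := fun h => hx0 (by simp [h])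
  rw [Submodule.mem_span_range_iff_exists_fun] at hxW hxU
  obtain ⟨cw, hcw⟩ := hxW
  obtain ⟨cu, hcu⟩ := hxU
  -- support of x
  have hsupp : ∀ j, j ∉ F → x j = 0 := by
    intro j hj
    have h2 := congrFun hcu j
    simp only [Finset.sum_apply, Pi.smul_apply, Pi.basisFun_apply, smul_eq_mul] at h2
    rw [← h2]
    apply Finset.sum_eq_zero
    intro i _
    rw [Pi.single_apply, if_neg (by rintro rfl; exact hj i.2)]
    simp
  -- L *ᵥ x
  have hLx : L *ᵥ x = ∑ i : T, (cw i * μ (i : Fin n)) • ⇑(b (i : Fin n)) := by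
    rw [← hcw]
    rw [show L *ᵥ (∑ i : T, cw i • ⇑(b (i : Fin n))) =
        L.mulVecLin (∑ i : T, cw i • ⇑(b (i : Fin n))) from rfl]
    rw [map_sum]
    refine Finset.sum_congr rfl fun i _ => ?_
    rw [_root_.map_smul, Matrix.mulVecLin_apply, hL.mulVec_eigenvectorBasis, smul_smul, mul_comm]
  have hdot1 : x ⬝ᵥ (L *ᵥ x) = ∑ i : T, μ (i : Fin n) * cw i ^ 2 := by
    rw [hLx]
    conv_lhs => rw [← hcw]
    rw [aux_sum_dot]
    refine Finset.sum_congr rfl fun i _ => ?_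
    rw [smul_dotProduct, aux_dot_sum]
    simp only [dotProduct_smul, hbij, smul_eq_mul, mul_ite, mul_one, mul_zero,
      Subtype.val_inj]
    rw [Finset.sum_ite_eq]
    simp only [Finset.mem_univ, if_true]
    ring
  have hdot2 : x ⬝ᵥ x = ∑ i : T, cw i ^ 2 := by
    conv_lhs => rw [← hcw]
    rw [aux_sum_dot]
    refine Finset.sum_congr rfl fun i _ => ?_
    rw [smul_dotProduct, aux_dot_sum]
    simp only [dotProduct_smul, hbij, smul_eq_mul, mul_ite, mul_one, mul_zero,
      Subtype.val_inj]
    rw [Finset.sum_ite_eq]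
    simp only [Finset.mem_univ, if_true]
    ring
  have hex : ∃ i : T, cw i ≠ 0 := by
    by_contra hall
    push_neg at hall
    exact hxne (by rw [← hcw]; exact Finset.sum_eq_zero fun i _ => by rw [hall i, zero_smul])
  obtain ⟨i0, hi0⟩ := hex
  have hstrict : ∑ i : T, μ (i : Fin n) * cw i ^ 2 < ∑ i : T, c * cw i ^ 2 := by
    apply Finset.sum_lt_sum
    · intro i _
      have h1 : μ (i : Fin n) < c := (Finset.mem_filter.mp i.2).2
      exact mul_le_mul_of_nonneg_right h1.le (sq_nonneg _)
    · refine ⟨i0, Finset.mem_univ _, ?_⟩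
      have h1 : μ (i0 : Fin n) < c := (Finset.mem_filter.mp i0.2).2
      exact mul_lt_mul_of_pos_right h1 (by positivity)
  have hQx := hQ x hsupp
  rw [hdot1, hdot2] at hQx
  rw [Finset.mul_sum] at hQx
  linarith

open Matrix in
open Finset in
/-- Weighted lower bound: `λ_m(G) ≥ d_m - Δ(G_{l_m})`, where `G_{l_m}` is the subgraph
induced on the `n - m + 1` vertices of largest degree. -/
theorem weighted_lap_eigenvalue_lower_bound (n m : ℕ) (hm : 1 ≤ m) (hmn : m ≤ n)
    (A : Matrix (Fin n) (Fin n) ℝ) (hsymm : A.IsSymm)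
    (hnonneg : ∀ i j, 0 ≤ A i j) (hdiag : ∀ i, A i i = 0)
    (hmono : Monotone (fun i : Fin n => ∑ j, A i j))
    (eigs : Fin n → ℝ) (heigs : Monotone eigs)
    (hroots : (Matrix.diagonal (fun i => ∑ j, A i j) - A).charpoly.roots
      = Finset.univ.val.map eigs) :
    eigs ⟨m - 1, by omega⟩ ≥ (∑ j, A ⟨m - 1, by omega⟩ j) -
      (Finset.univ.filter (fun i : Fin n => m - 1 ≤ i.val)).sup'
        ⟨⟨m - 1, by omega⟩, by simp; omega⟩
        (fun i => ∑ j ∈ Finset.univ.filter (fun j : Fin n => m - 1 ≤ j.val), A i j) := by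
  classical
  have hsymm2 : ∀ a b, A a b = A b a := fun a b => (congrFun (congrFun hsymm b) a)
  set d : Fin n → ℝ := fun i => ∑ j, A i j with hd
  set F := Finset.univ.filter (fun i : Fin n => m - 1 ≤ i.val) with hF
  suffices main : ∀ hne : F.Nonempty,
      eigs ⟨m - 1, by omega⟩ ≥ d ⟨m - 1, by omega⟩ -
        F.sup' hne (fun i => ∑ j ∈ F, A i j) by
    exact main _
  intro hne
  set idx : Fin n := ⟨m - 1, by omega⟩ with hidx
  set Δ : ℝ := F.sup' hne (fun i => ∑ j ∈ F, A i j) with hΔ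
  set c : ℝ := d idx - Δ with hc
  set L : Matrix (Fin n) (Fin n) ℝ := Matrix.diagonal d - A with hL
  have hherm : L.IsHermitian := by
    rw [Matrix.IsHermitian]
    ext i j
    simp only [Matrix.conjTranspose_apply, hL, Matrix.sub_apply, Matrix.diagonal_apply, star_sub,
      star_trivial]
    rw [hsymm2 j i]
    by_cases h : i = j
    · subst h; simp
    · rw [if_neg h, if_neg (fun hji => h hji.symm)]
  -- quadratic form bound on vectors supported on F
  have hQ : ∀ x : Fin n → ℝ, (∀ j, j ∉ F → x j = 0) →
      c * (x ⬝ᵥ x) ≤ x ⬝ᵥ (L *ᵥ x) := by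
    intro x hsupp
    have hdiagdot : x ⬝ᵥ (Matrix.diagonal d *ᵥ x) = ∑ i, d i * x i ^ 2 := by
      simp only [dotProduct, Matrix.mulVec_diagonal]
      exact Finset.sum_congr rfl fun i _ => by ring
    have hAdot : x ⬝ᵥ (A *ᵥ x) = ∑ i, ∑ j, A i j * x i * x j := by
      simp only [dotProduct, Matrix.mulVec, Finset.mul_sum]
      exact Finset.sum_congr rfl fun i _ => Finset.sum_congr rfl fun j _ => by ring
    have hxx : x ⬝ᵥ x = ∑ i, x i ^ 2 := by
      simp only [dotProduct]
      exact Finset.sum_congr rfl fun i _ => by ring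
    have hLdot : x ⬝ᵥ (L *ᵥ x) = (∑ i, d i * x i ^ 2) - ∑ i, ∑ j, A i j * x i * x j := by
      rw [hL, Matrix.sub_mulVec, dotProduct_sub, hdiagdot, hAdot]
    -- diagonal part bound
    have hdbound : d idx * (∑ i, x i ^ 2) ≤ ∑ i, d i * x i ^ 2 := by
      rw [Finset.mul_sum]
      apply Finset.sum_le_sum
      intro i _
      by_cases hi : i ∈ F
      · have hle : idx ≤ i := by
          have := (Finset.mem_filter.mp hi).2
          exact Fin.mk_le_of_le_val this
        exact mul_le_mul_of_nonneg_right (hmono hle) (sq_nonneg _)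
      · rw [hsupp i hi]; simp
    -- adjacency part bound
    have hrestrict : ∑ i, ∑ j, A i j * x i * x j = ∑ i ∈ F, ∑ j ∈ F, A i j * x i * x j := by
      have inner : ∀ i : Fin n, ∑ j, A i j * x i * x j = ∑ j ∈ F, A i j * x i * x j :=
        fun i => (Finset.sum_subset (Finset.subset_univ F)
          (fun j _ hj => by rw [hsupp j hj, mul_zero])).symm
      calc ∑ i, ∑ j, A i j * x i * x j = ∑ i, ∑ j ∈ F, A i j * x i * x j :=
            Finset.sum_congr rfl fun i _ => inner i
        _ = ∑ i ∈ F, ∑ j ∈ F, A i j * x i * x j :=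
            (Finset.sum_subset (Finset.subset_univ F) (fun i _ hi =>
              Finset.sum_eq_zero fun j _ => by rw [hsupp i hi]; ring)).symm
    have hb2 : 2 * (∑ i ∈ F, ∑ j ∈ F, A i j * x i * x j)
        ≤ (∑ i ∈ F, ∑ j ∈ F, A i j * x i ^ 2) + ∑ i ∈ F, ∑ j ∈ F, A i j * x j ^ 2 := by
      rw [Finset.mul_sum, ← Finset.sum_add_distrib]
      apply Finset.sum_le_sum
      intro i _
      rw [Finset.mul_sum, ← Finset.sum_add_distrib]
      apply Finset.sum_le_sum
      intro j _
      nlinarith [hnonneg i j, sq_nonneg (x i - x j)]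
    have hQ2P : ∑ i ∈ F, ∑ j ∈ F, A i j * x j ^ 2 = ∑ i ∈ F, ∑ j ∈ F, A i j * x i ^ 2 := by
      rw [Finset.sum_comm]
      exact Finset.sum_congr rfl fun i _ => Finset.sum_congr rfl fun j _ => by
        rw [hsymm2 j i]
    have hPsum : ∑ i ∈ F, ∑ j ∈ F, A i j * x i ^ 2 = ∑ i ∈ F, (∑ j ∈ F, A i j) * x i ^ 2 :=
      Finset.sum_congr rfl fun i _ => by rw [Finset.sum_mul]
    have hPΔ : ∑ i ∈ F, (∑ j ∈ F, A i j) * x i ^ 2 ≤ ∑ i ∈ F, Δ * x i ^ 2 :=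
      Finset.sum_le_sum fun i hi =>
        mul_le_mul_of_nonneg_right
          (by rw [hΔ]; exact Finset.le_sup' (fun i => ∑ j ∈ F, A i j) hi) (sq_nonneg _)
    have hback : ∑ i ∈ F, Δ * x i ^ 2 = Δ * ∑ i, x i ^ 2 := by
      rw [← Finset.mul_sum]
      congr 1
      exact Finset.sum_subset (Finset.subset_univ F)
        (fun i _ hi => by rw [hsupp i hi]; ring)
    have hAbound : ∑ i, ∑ j, A i j * x i * x j ≤ Δ * ∑ i, x i ^ 2 := by
      rw [hrestrict]
      nlinarith [hb2, hQ2P, hPsum, hPΔ, hback]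
    rw [hLdot, hxx, hc]
    nlinarith [hdbound, hAbound]
  -- apply the counting bound
  have hcard := aux_card_bound hherm F c hQ
  -- cardinality of F
  have hIio : (Finset.univ.filter fun i : Fin n => (i : ℕ) < m - 1) = Finset.Iio idx := by
    ext i
    simp [Fin.lt_def, hidx]
  have hFcard : F.card + (m - 1) = n := by
    have h1 := Finset.card_filter_add_card_filter_not
      (s := (Finset.univ : Finset (Fin n))) (p := fun i : Fin n => m - 1 ≤ (i : ℕ))
    have h2 : (Finset.univ.filter fun i : Fin n => ¬ (m - 1 ≤ (i : ℕ))).card = m - 1 := by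
      have h3 : (Finset.univ.filter fun i : Fin n => ¬ (m - 1 ≤ (i : ℕ)))
          = Finset.univ.filter fun i : Fin n => (i : ℕ) < m - 1 := by
        apply Finset.filter_congr
        intro i _
        constructor
        · intro h; omega
        · intro h; omega
      rw [h3, hIio, Fin.card_Iio]
    rw [h2] at h1
    simpa [hF] using h1
  -- now conclude
  by_contra hgoal
  push_neg at hgoal
  -- hgoal : d idx - Δ > eigs idx, i.e. eigs idx < c
  have hgoal' : eigs idx < c := by rw [hc]; exact hgoal
  -- count of eigs ≥ c is at most n - m
  have hGsub : (Finset.univ.filter fun i : Fin n => c ≤ eigs i) ⊆ Finset.Ioi idx := by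
    intro i hi
    rw [Finset.mem_filter] at hi
    rw [Finset.mem_Ioi]
    by_contra hle
    push_neg at hle
    exact absurd (le_trans hi.2 (heigs hle)) (not_le.mpr hgoal')
  have hGcard : (Finset.univ.filter fun i : Fin n => c ≤ eigs i).card ≤ n - 1 - (m - 1) := by
    have := Finset.card_le_card hGsub
    rwa [Fin.card_Ioi] at this
  -- transfer counts through the multiset equality
  have hmult : Finset.univ.val.map hherm.eigenvalues = Finset.univ.val.map eigs := by
    rw [← aux_roots_eq hherm, hL, hd]
    exact hroots
  have hcnt : (Finset.univ.filter fun i : Fin n => c ≤ hherm.eigenvalues i).card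
      = (Finset.univ.filter fun i : Fin n => c ≤ eigs i).card := by
    have h1 := congrArg (fun s : Multiset ℝ => (s.filter (fun t => c ≤ t)).card) hmult
    simpa only [Multiset.filter_map, Multiset.card_map, Finset.card, Finset.filter_val,
      Function.comp] using h1
  -- counts of hherm.eigenvalues
  have hsplit := Finset.card_filter_add_card_filter_not
    (s := (Finset.univ : Finset (Fin n))) (p := fun i : Fin n => hherm.eigenvalues i < c)
  have hneg : (Finset.univ.filter fun i : Fin n => ¬ (hherm.eigenvalues i < c))
      = Finset.univ.filter fun i : Fin n => c ≤ hherm.eigenvalues i := by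
    apply Finset.filter_congr
    intro i _
    simp [not_lt]
  rw [hneg] at hsplit
  rw [Finset.card_univ, Fintype.card_fin] at hsplit
  rw [hcnt] at hsplit
  omega
end

section
/- Let A be a symmetric n×n real matrix with nonnegative entries and zero diagonal (a weighted graph G), with degrees d_i = Σ_j a_{ij} ordered so that d_1 ≤ d_2 ≤ … ≤ d_n, and Laplacian L = D − A. Let a = max_{i,j} a_{ij} be the maximal edge weight. For 1 ≤ m ≤ n−1, let δ(G_{S_m}) = min_{1 ≤ i ≤ m} Σ_{1 ≤ j ≤ m} a_{ij} be the minimum degree of the subgraph induced on the m vertices of smallest degree. Then the (m+1)-th smallest eigenvalue of L satisfies λ_{m+1}(G) ≤ d_m + m·a − δ(G_{S_m}). -/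
section WeightedLap
open Polynomial Matrix Finset


lemma charpoly_conj_aux {n : ℕ} (U V M : Matrix (Fin n) (Fin n) ℝ)
    (hUV : U * V = 1) (hVU : V * U = 1) : (U * M * V).charpoly = M.charpoly := by
  have hdet : (U.map C).det * (V.map C).det = 1 := by
    rw [← det_mul, ← Matrix.map_mul, hUV, Matrix.map_one _ (map_zero C) (map_one C), det_one]
  have hX : U.map C * (Matrix.diagonal fun _ : Fin n => (X : ℝ[X])) * V.map C
      = Matrix.diagonal fun _ : Fin n => (X : ℝ[X]) := by
    rw [← Matrix.smul_one_eq_diagonal, Matrix.mul_smul, Matrix.smul_mul, Matrix.mul_one,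
      ← Matrix.map_mul, hUV, Matrix.map_one _ (map_zero C) (map_one C)]
  have hcm : charmatrix (U * M * V)
      = (U.map C) * charmatrix M * (V.map C) := by
    unfold charmatrix
    rw [Matrix.mul_sub, Matrix.sub_mul]
    congr 1
    · rw [scalar_apply]; exact hX.symm
    · simp only [RingHom.mapMatrix_apply]
      rw [← Matrix.map_mul, ← Matrix.map_mul]
  unfold Matrix.charpoly
  rw [hcm, det_mul, det_mul]
  calc (U.map C).det * M.charmatrix.det * (V.map C).det
      = M.charmatrix.det * ((U.map C).det * (V.map C).det) := by ring
    _ = M.charmatrix.det := by rw [hdet, mul_one]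

lemma charpoly_diag_aux {n : ℕ} (v : Fin n → ℝ) :
    (Matrix.diagonal v).charpoly.roots = Finset.univ.val.map v := by
  have hcm : charmatrix (Matrix.diagonal v) = Matrix.diagonal (fun i => (X : ℝ[X]) - C (v i)) := by
    ext i j
    by_cases h : i = j
    · subst h; simp [charmatrix_apply_eq]
    · simp [charmatrix_apply_ne _ _ _ h, Matrix.diagonal_apply_ne _ h]
  rw [Matrix.charpoly, hcm, det_diagonal]
  have : ∏ i, ((X : ℝ[X]) - C (v i)) = ((Finset.univ.val.map v).map (fun a => (X:ℝ[X]) - C a)).prod := by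
    rw [Multiset.map_map]
    rfl
  rw [this, Polynomial.roots_multiset_prod_X_sub_C]

lemma roots_charpoly_isHermitian {n : ℕ} (L : Matrix (Fin n) (Fin n) ℝ) (hL : L.IsHermitian) :
    L.charpoly.roots = Finset.univ.val.map hL.eigenvalues := by
  have hUV : (hL.eigenvectorUnitary : Matrix (Fin n) (Fin n) ℝ)
      * star (hL.eigenvectorUnitary : Matrix (Fin n) (Fin n) ℝ) = 1 :=
    mem_unitaryGroup_iff.mp hL.eigenvectorUnitary.2
  have hVU : star (hL.eigenvectorUnitary : Matrix (Fin n) (Fin n) ℝ)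
      * (hL.eigenvectorUnitary : Matrix (Fin n) (Fin n) ℝ) = 1 :=
    mem_unitaryGroup_iff'.mp hL.eigenvectorUnitary.2
  have key : L.charpoly = (Matrix.diagonal hL.eigenvalues).charpoly := by
    conv_lhs => rw [hL.spectral_theorem, Unitary.conjStarAlgAut_apply]
    rw [charpoly_conj_aux _ _ _ hUV hVU]
    congr 1
  rw [key, charpoly_diag_aux]




lemma expand_aux {α : Type*} [DecidableEq α] (S : Finset α) (a : ℝ) (A : α → α → ℝ) (y : α → ℝ) :
    ∑ p ∈ S, ∑ q ∈ S, (a - A p q) * ((y p - y q)*(y p - y q))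
    = 2*((S.card : ℝ)*a*(∑ p ∈ S, y p*y p)) - 2*(a*((∑ p ∈ S, y p)*(∑ p ∈ S, y p)))
      - (∑ p ∈ S, (∑ q ∈ S, A p q)*(y p*y p)) - (∑ q ∈ S, (∑ p ∈ S, A p q)*(y q*y q))
      + 2*(∑ p ∈ S, ∑ q ∈ S, A p q*(y p*y q)) := by
  have hper : ∀ p, ∑ q ∈ S, (a - A p q) * ((y p - y q)*(y p - y q))
      = (S.card : ℝ)*(a*(y p*y p)) + a*(∑ q ∈ S, y q*y q)
        - (2*a*y p)*(∑ q ∈ S, y q)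
        - (∑ q ∈ S, A p q)*(y p*y p) - (∑ q ∈ S, A p q*(y q*y q))
        + 2*(∑ q ∈ S, A p q*(y p*y q)) := by
    intro p
    calc ∑ q ∈ S, (a - A p q) * ((y p - y q)*(y p - y q))
        = ∑ q ∈ S, (a*(y p*y p) + a*(y q*y q) - (2*a*y p)*y q
            - A p q*(y p*y p) - A p q*(y q*y q) + 2*(A p q*(y p*y q))) :=
          Finset.sum_congr rfl fun q _ => by ring
      _ = ((((∑ q ∈ S, a*(y p*y p)) + (∑ q ∈ S, a*(y q*y q))) - (∑ q ∈ S, (2*a*y p)*y q))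
            - (∑ q ∈ S, A p q*(y p*y p)) - (∑ q ∈ S, A p q*(y q*y q)))
            + (∑ q ∈ S, 2*(A p q*(y p*y q))) := by
          rw [Finset.sum_add_distrib, Finset.sum_sub_distrib, Finset.sum_sub_distrib,
            Finset.sum_sub_distrib, Finset.sum_add_distrib]
      _ = _ := by
          rw [Finset.sum_const, nsmul_eq_mul, ← Finset.mul_sum, ← Finset.mul_sum,
            ← Finset.sum_mul, ← Finset.mul_sum]
  calc ∑ p ∈ S, ∑ q ∈ S, (a - A p q) * ((y p - y q)*(y p - y q))
      = ∑ p ∈ S, ((S.card : ℝ)*(a*(y p*y p)) + a*(∑ q ∈ S, y q*y q)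
        - (2*a*(∑ q ∈ S, y q))*y p
        - (∑ q ∈ S, A p q)*(y p*y p) - (∑ q ∈ S, A p q*(y q*y q))
        + 2*(∑ q ∈ S, A p q*(y p*y q))) :=
        Finset.sum_congr rfl fun p _ => by rw [hper p]; ring
    _ = (((((∑ p ∈ S, (S.card : ℝ)*(a*(y p*y p))) + (∑ p ∈ S, a*(∑ q ∈ S, y q*y q)))
          - (∑ p ∈ S, (2*a*(∑ q ∈ S, y q))*y p))
          - (∑ p ∈ S, (∑ q ∈ S, A p q)*(y p*y p)))
          - (∑ p ∈ S, ∑ q ∈ S, A p q*(y q*y q)))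
          + (∑ p ∈ S, 2*(∑ q ∈ S, A p q*(y p*y q))) := by
        rw [Finset.sum_add_distrib, Finset.sum_sub_distrib, Finset.sum_sub_distrib,
          Finset.sum_sub_distrib, Finset.sum_add_distrib]
    _ = _ := by
        rw [← Finset.mul_sum, Finset.sum_const, nsmul_eq_mul, ← Finset.mul_sum,
          ← Finset.mul_sum, ← Finset.mul_sum (a := (2:ℝ)),
          Finset.sum_comm (s := S) (t := S) (f := fun p q => A p q*(y q*y q))]
        have hswap : ∑ q ∈ S, ∑ p ∈ S, A p q*(y q*y q)
            = ∑ q ∈ S, (∑ p ∈ S, A p q)*(y q*y q) :=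
          Finset.sum_congr rfl fun q _ => by rw [Finset.sum_mul]
        rw [hswap]
        ring

set_option maxHeartbeats 2000000 in
theorem aux_main (n m : ℕ) (hm : 1 ≤ m) (hmn : m < n)
    (A : Matrix (Fin n) (Fin n) ℝ) (hsymm : A.IsSymm)
    (hnonneg : ∀ i j, 0 ≤ A i j) (hdiag : ∀ i, A i i = 0)
    (hmono : Monotone (fun i : Fin n => ∑ j, A i j))
    (a : ℝ) (ha : IsGreatest {x : ℝ | ∃ i j, A i j = x} a)
    (eigs : Fin n → ℝ) (heigs : Monotone eigs)
    (hroots : (Matrix.diagonal (fun i => ∑ j, A i j) - A).charpoly.roots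
      = Finset.univ.val.map eigs)
    (δ : ℝ)
    (hδ : ∀ i : Fin n, (i : ℕ) < m →
      δ ≤ ∑ j ∈ Finset.univ.filter (fun j : Fin n => (j : ℕ) < m), A i j) :
    eigs ⟨m, hmn⟩ ≤ (∑ j, A ⟨m - 1, by omega⟩ j) + m * a - δ := by
  classical
  set d : Fin n → ℝ := fun i => ∑ j, A i j with hd
  set L : Matrix (Fin n) (Fin n) ℝ := Matrix.diagonal d - A with hLdef
  have hs : ∀ i j, A j i = A i j := by
    intro i j
    conv_lhs => rw [← hsymm, Matrix.transpose_apply]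
  have hL : L.IsHermitian := by
    rw [Matrix.IsHermitian]
    ext i j
    simp only [Matrix.conjTranspose_apply, Matrix.sub_apply, star_trivial, hLdef]
    by_cases h : i = j
    · subst h; rfl
    · rw [Matrix.diagonal_apply_ne _ h, Matrix.diagonal_apply_ne _ (Ne.symm h), hs]
  set μ : Fin n → ℝ := hL.eigenvalues with hμ
  have hmaps : Finset.univ.val.map eigs = Finset.univ.val.map μ :=
    hroots ▸ roots_charpoly_isHermitian L hL
  set im1 : Fin n := ⟨m - 1, by omega⟩ with him1
  set dm : ℝ := ∑ j, A im1 j with hdm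
  by_contra hcon
  push_neg at hcon
  set K : ℝ := dm + m * a - δ with hK
  -- counting
  have hcount : ∀ (v : Fin n → ℝ), (Finset.univ.filter (fun k : Fin n => K < v k)).card
      = Multiset.countP (fun x => K < x) (Finset.univ.val.map v) := by
    intro v
    rw [Multiset.countP_map]
    rfl
  have hcard_eq : (Finset.univ.filter (fun k : Fin n => K < eigs k)).card
      = (Finset.univ.filter (fun k : Fin n => K < μ k)).card := by
    rw [hcount eigs, hcount μ, hmaps]
  have hsub : Finset.univ.filter (fun k : Fin n => m ≤ (k : ℕ))
      ⊆ Finset.univ.filter (fun k : Fin n => K < eigs k) := by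
    intro k hk
    simp only [Finset.mem_filter, Finset.mem_univ, true_and] at hk ⊢
    exact lt_of_lt_of_le hcon (heigs (show (⟨m, hmn⟩ : Fin n) ≤ k from hk))
  have hcard_ge : n - m ≤ (Finset.univ.filter (fun k : Fin n => m ≤ (k : ℕ))).card := by
    have : (Finset.univ.filter (fun k : Fin n => m ≤ (k : ℕ))).card
        = ((Finset.range n).filter (fun k => m ≤ k)).card := by
      rw [Finset.card_filter, Finset.card_filter]
      exact Fin.sum_univ_eq_sum_range (fun i => if m ≤ i then 1 else 0) n
    rw [this]
    have : (Finset.range n).filter (fun k => m ≤ k) = Finset.Ico m n := by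
      ext k; simp [Finset.mem_Ico]; omega
    rw [this, Nat.card_Ico]
  have hBcard : n - m ≤ (Finset.univ.filter (fun k : Fin n => K < μ k)).card := by
    rw [← hcard_eq]
    exact le_trans hcard_ge (Finset.card_le_card hsub)
  set Bc : Finset (Fin n) := Finset.univ.filter (fun k : Fin n => ¬ K < μ k) with hBc
  have hBccard : Bc.card ≤ m := by
    have htot : (Finset.univ.filter (fun k : Fin n => K < μ k)).card + Bc.card
        = (Finset.univ : Finset (Fin n)).card :=
      Finset.card_filter_add_card_filter_not (p := fun k : Fin n => K < μ k)
    simp only [Finset.card_univ, Fintype.card_fin] at htot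
    omega
  -- eigenbasis facts
  set U : Matrix (Fin n) (Fin n) ℝ := (hL.eigenvectorUnitary : Matrix (Fin n) (Fin n) ℝ) with hU
  set b : Fin n → (Fin n → ℝ) := fun j => ⇑(hL.eigenvectorBasis j) with hb
  have hUapp : ∀ p j, U p j = b j p := fun p j => rfl
  have hUV : U * star U = 1 := mem_unitaryGroup_iff.mp hL.eigenvectorUnitary.2
  have hComplete : ∀ p q, ∑ j, b j p * b j q = if p = q then (1:ℝ) else 0 := by
    intro p q
    have h : (U * star U) p q = (1 : Matrix (Fin n) (Fin n) ℝ) p q := by rw [hUV]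
    simpa [Matrix.mul_apply, Matrix.conjTranspose_apply, Matrix.one_apply, hUapp] using h
  have hEigCoord : ∀ j p, ∑ q, L p q * b j q = μ j * b j p := by
    intro j p
    have h := congrFun (hL.mulVec_eigenvectorBasis j) p
    simpa [Matrix.mulVec, dotProduct] using h
  -- kernel vector
  set W : Matrix (Fin n) (Fin (m+1)) ℝ := Matrix.of (fun p i =>
    (if (i:ℕ) = (p:ℕ) ∧ (p:ℕ) < m then (1:ℝ) else 0) + (if (i:ℕ) = m then (1:ℝ) else 0)) with hW
  set Mmat : Matrix {j : Fin n // j ∈ Bc} (Fin n) ℝ := Matrix.of (fun j p => b j.1 p) with hMmat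
  have h1 : Module.finrank ℝ (Fin (m+1) → ℝ) = m + 1 := by
    simp [Module.finrank_pi]
  have h2 : Module.finrank ℝ ({j : Fin n // j ∈ Bc} → ℝ) = Bc.card := by
    simp [Module.finrank_pi, Fintype.card_coe]
  have h3 := LinearMap.finrank_range_add_finrank_ker (Mmat * W).mulVecLin
  have h4 : Module.finrank ℝ (LinearMap.range (Mmat * W).mulVecLin) ≤ Bc.card :=
    le_trans (Submodule.finrank_le _) (le_of_eq h2)
  have hker : LinearMap.ker (Mmat * W).mulVecLin ≠ ⊥ := by
    intro hbot
    rw [hbot, finrank_bot, h1] at h3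
    omega
  obtain ⟨c, hcmem, hc0⟩ := Submodule.exists_mem_ne_zero_of_ne_bot hker
  have hfc : (Mmat * W) *ᵥ c = 0 := by
    have := LinearMap.mem_ker.1 hcmem
    rwa [Matrix.mulVecLin_apply] at this
  set x : Fin n → ℝ := W *ᵥ c with hx
  have horth : ∀ j : Fin n, ¬ K < μ j → (∑ p, b j p * x p) = 0 := by
    intro j hj
    have hjBc : j ∈ Bc := by
      simp only [hBc, Finset.mem_filter, Finset.mem_univ, true_and]
      exact hj
    have h := congrFun hfc ⟨j, hjBc⟩
    rw [← Matrix.mulVec_mulVec] at h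
    simpa [Matrix.mulVec, dotProduct, hMmat, hx] using h
  have keysum : ∀ (k : Fin (m+1)) (g : Fin (m+1) → ℝ),
      ∑ i : Fin (m+1), (if (i:ℕ) = (k:ℕ) then (1:ℝ) else 0) * g i = g k := by
    intro k g
    have he : ∀ i : Fin (m+1), ((i:ℕ) = (k:ℕ)) = (i = k) := fun i => by
      simp [Fin.val_eq_val]
    simp only [he, ite_mul, one_mul, zero_mul, Finset.sum_ite_eq', Finset.mem_univ, if_true]
  have hxcoord : ∀ p : Fin n,
      x p = (if h : (p:ℕ) < m then c ⟨(p:ℕ), by omega⟩ else 0) + c ⟨m, by omega⟩ := by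
    intro p
    show (W *ᵥ c) p = _
    simp only [Matrix.mulVec, dotProduct, hW, Matrix.of_apply, add_mul]
    rw [Finset.sum_add_distrib]
    by_cases hp : (p:ℕ) < m
    · rw [dif_pos hp]
      congr 1
      · have hcongr : ∀ i : Fin (m+1), (if (i:ℕ) = (p:ℕ) ∧ (p:ℕ) < m then (1:ℝ) else 0) * c i
            = (if (i:ℕ) = (((⟨(p:ℕ), by omega⟩ : Fin (m+1))):ℕ) then (1:ℝ) else 0) * c i := by
          intro i; simp [hp]
        rw [Finset.sum_congr rfl (fun i _ => hcongr i), keysum]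
      · exact keysum ⟨m, by omega⟩ c
    · rw [dif_neg hp]
      congr 1
      · have h0 : ∀ i : Fin (m+1), (if (i:ℕ) = (p:ℕ) ∧ (p:ℕ) < m then (1:ℝ) else 0) * c i = 0 := by
          intro i; simp [hp]
        rw [Finset.sum_congr rfl (fun i _ => h0 i), Finset.sum_const_zero]
      · exact keysum ⟨m, by omega⟩ c
  have hxne : x ≠ 0 := by
    intro hx0
    apply hc0
    have hclast : c ⟨m, by omega⟩ = 0 := by
      have := hxcoord ⟨m, hmn⟩
      rw [hx0] at this
      simpa using this.symm
    funext i
    by_cases hi : (i:ℕ) < m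
    · have := hxcoord ⟨(i:ℕ), by omega⟩
      rw [hx0] at this
      simp only [hi, dif_pos, hclast, add_zero] at this
      simpa using this.symm
    · have : i = ⟨m, by omega⟩ := by
        apply Fin.ext; simp; omega
      rw [this, hclast]
      rfl
  -- expansion in eigenbasis
  set t : Fin n → ℝ := fun j => ∑ p, b j p * x p with ht
  have hxpand : ∀ p, x p = ∑ j, t j * b j p := by
    intro p
    calc x p = ∑ q, (if q = p then (1:ℝ) else 0) * x q := by
          simp [ite_mul, one_mul, zero_mul]
      _ = ∑ q, (∑ j, b j q * b j p) * x q := by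
          refine Finset.sum_congr rfl fun q _ => ?_
          rw [hComplete]
      _ = ∑ q, ∑ j, (b j q * x q) * b j p := by
          refine Finset.sum_congr rfl fun q _ => ?_
          rw [Finset.sum_mul]
          refine Finset.sum_congr rfl fun j _ => by ring
      _ = ∑ j, ∑ q, (b j q * x q) * b j p := Finset.sum_comm
      _ = ∑ j, t j * b j p := by
          refine Finset.sum_congr rfl fun j _ => ?_
          rw [ht, ← Finset.sum_mul]
  have hQuadForm : ∑ p, x p * (∑ q, L p q * x q) = ∑ j, μ j * (t j * t j) := by
    have hLx : ∀ p, (∑ q, L p q * x q) = ∑ j, (t j * μ j) * b j p := by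
      intro p
      calc ∑ q, L p q * x q = ∑ q, ∑ j, t j * (L p q * b j q) := by
            refine Finset.sum_congr rfl fun q _ => ?_
            rw [hxpand q, Finset.mul_sum]
            refine Finset.sum_congr rfl fun j _ => by ring
        _ = ∑ j, ∑ q, t j * (L p q * b j q) := Finset.sum_comm
        _ = ∑ j, (t j * μ j) * b j p := by
            refine Finset.sum_congr rfl fun j _ => ?_
            rw [← Finset.mul_sum, hEigCoord j p]
            ring
    calc ∑ p, x p * (∑ q, L p q * x q) = ∑ p, ∑ j, (t j * μ j) * (b j p * x p) := by
          refine Finset.sum_congr rfl fun p _ => ?_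
          rw [hLx p, Finset.mul_sum]
          refine Finset.sum_congr rfl fun j _ => by ring
      _ = ∑ j, ∑ p, (t j * μ j) * (b j p * x p) := Finset.sum_comm
      _ = ∑ j, μ j * (t j * t j) := by
          refine Finset.sum_congr rfl fun j _ => ?_
          rw [← Finset.mul_sum, ht]
          ring
  have hNorm : ∑ p, x p * x p = ∑ j, t j * t j := by
    calc ∑ p, x p * x p = ∑ p, ∑ j, t j * (b j p * x p) := by
          refine Finset.sum_congr rfl fun p _ => ?_
          nth_rewrite 1 [hxpand p]
          rw [Finset.sum_mul]
          refine Finset.sum_congr rfl fun j _ => by ring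
      _ = ∑ j, ∑ p, t j * (b j p * x p) := Finset.sum_comm
      _ = ∑ j, t j * t j := by
          refine Finset.sum_congr rfl fun j _ => ?_
          rw [← Finset.mul_sum, ht]
  have hxxpos : 0 < ∑ p, x p * x p := by
    rcases Function.ne_iff.1 hxne with ⟨p0, hp0⟩
    refine Finset.sum_pos' (fun p _ => mul_self_nonneg _) ⟨p0, Finset.mem_univ _, ?_⟩
    exact mul_self_pos.2 hp0
  obtain ⟨j0, hj0⟩ : ∃ j0, t j0 ≠ 0 := by
    by_contra hall
    push_neg at hall
    rw [hNorm] at hxxpos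
    simp [hall] at hxxpos
  have hμj0 : K < μ j0 := by
    by_contra hnot
    exact hj0 (horth j0 hnot)
  have hlow : K * (∑ p, x p * x p) < ∑ p, x p * (∑ q, L p q * x q) := by
    rw [hNorm, hQuadForm, Finset.mul_sum]
    apply Finset.sum_lt_sum
    · intro j _
      by_cases hj : K < μ j
      · exact mul_le_mul_of_nonneg_right (le_of_lt hj) (mul_self_nonneg _)
      · have htj : t j = 0 := horth j hj
        rw [htj]
        simp
    · exact ⟨j0, Finset.mem_univ _, mul_lt_mul_of_pos_right hμj0 (mul_self_pos.2 hj0)⟩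
  have hup : ∑ p, x p * (∑ q, L p q * x q) ≤ K * (∑ p, x p * x p) := by
    have hA_le : ∀ p q, A p q ≤ a := fun p q => ha.2 ⟨p, q, rfl⟩
    have ha0 : (0:ℝ) ≤ a := ha.2 ⟨⟨0, by omega⟩, ⟨0, by omega⟩, hdiag _⟩
    set c0 : ℝ := c ⟨m, by omega⟩ with hc0def
    set y : Fin n → ℝ := fun p => if h : (p:ℕ) < m then c ⟨(p:ℕ), by omega⟩ else 0 with hy
    have hxy : ∀ p, x p = y p + c0 := fun p => hxcoord p
    have hysupp : ∀ p : Fin n, ¬((p:ℕ) < m) → y p = 0 := fun p hp => dif_neg hp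
    set S' : Finset (Fin n) := Finset.univ.filter (fun i : Fin n => (i:ℕ) < m) with hS'
    have hmemS' : ∀ p : Fin n, p ∈ S' ↔ (p:ℕ) < m := by
      intro p; simp [hS']
    have hcardS : ((S'.card : ℕ) : ℝ) = m := by
      have e1 : S'.card = ((Finset.range n).filter (fun k => k < m)).card := by
        rw [hS', Finset.card_filter, Finset.card_filter]
        exact Fin.sum_univ_eq_sum_range (fun i => if i < m then 1 else 0) n
      have e2 : (Finset.range n).filter (fun k => k < m) = Finset.range m := by
        ext k; simp [Finset.mem_range]; omega
      rw [e1, e2, Finset.card_range]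
    set s1 : ℝ := ∑ p, y p with hs1
    set N2 : ℝ := ∑ p, y p * y p with hN2
    set P : ℝ := ∑ p, ∑ q, A p q * (y p * y q) with hP
    set dsum : ℝ := ∑ p, d p * (y p * y p) with hdsumdef
    have hyS : ∑ p ∈ S', y p = s1 :=
      Finset.sum_subset (Finset.subset_univ _)
        (fun p _ hp => hysupp p (fun hlt => hp ((hmemS' p).2 hlt)))
    have hy2S : ∑ p ∈ S', y p * y p = N2 :=
      Finset.sum_subset (Finset.subset_univ _)
        (fun p _ hp => by rw [hysupp p (fun hlt => hp ((hmemS' p).2 hlt))]; ring)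
    have hPS : (∑ p ∈ S', ∑ q ∈ S', A p q * (y p * y q)) = P := by
      have inner : ∀ p, ∑ q ∈ S', A p q * (y p * y q) = ∑ q, A p q * (y p * y q) :=
        fun p => Finset.sum_subset (Finset.subset_univ _)
          (fun q _ hq => by rw [hysupp q (fun hlt => hq ((hmemS' q).2 hlt))]; ring)
      calc ∑ p ∈ S', ∑ q ∈ S', A p q * (y p * y q)
          = ∑ p ∈ S', ∑ q, A p q * (y p * y q) :=
            Finset.sum_congr rfl fun p _ => inner p
        _ = P := Finset.sum_subset (Finset.subset_univ _)
            (fun p _ hp => Finset.sum_eq_zero fun q _ => by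
              rw [hysupp p (fun hlt => hp ((hmemS' p).2 hlt))]; ring)
    have hcol : ∀ q, ∑ p, A p q = d q :=
      fun q => Finset.sum_congr rfl (fun p _ => hs q p)
    -- F1
    set R : ℝ := ∑ p ∈ S', (∑ q ∈ S', A p q) * (y p * y p) with hR
    have hTnn : (0:ℝ) ≤ ∑ p ∈ S', ∑ q ∈ S', (a - A p q) * ((y p - y q)*(y p - y q)) :=
      Finset.sum_nonneg fun p _ => Finset.sum_nonneg fun q _ =>
        mul_nonneg (sub_nonneg.2 (hA_le p q)) (mul_self_nonneg _)
    have hD5 : ∑ q ∈ S', (∑ p ∈ S', A p q) * (y q * y q) = R := by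
      refine Finset.sum_congr rfl fun q _ => ?_
      congr 1
      exact Finset.sum_congr rfl fun p _ => hs q p
    have hRδ : δ * N2 ≤ R := by
      have hterm : ∀ p ∈ S', δ * (y p * y p) ≤ (∑ q ∈ S', A p q) * (y p * y p) := fun p hp =>
        mul_le_mul_of_nonneg_right (hδ p ((hmemS' p).1 hp)) (mul_self_nonneg _)
      calc δ * N2 = ∑ p ∈ S', δ * (y p * y p) := by rw [← hy2S, Finset.mul_sum]
        _ ≤ R := Finset.sum_le_sum hterm
    have hF1 : a*(s1*s1) + δ*N2 ≤ (m:ℝ)*a*N2 + P := by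
      have h6 := hTnn
      rw [expand_aux S' a A y, hcardS, hyS, hy2S, hPS, hD5] at h6
      linarith [h6, hRδ]
    -- F2
    have hTnn2 : (0:ℝ) ≤ ∑ p, ∑ q, (a - A p q) * ((y p - y q)*(y p - y q)) :=
      Finset.sum_nonneg fun p _ => Finset.sum_nonneg fun q _ =>
        mul_nonneg (sub_nonneg.2 (hA_le p q)) (mul_self_nonneg _)
    have hD4u : ∑ p, (∑ q, A p q) * (y p * y p) = dsum := rfl
    have hD5u : ∑ q, (∑ p, A p q) * (y q * y q) = dsum := by
      refine Finset.sum_congr rfl fun q _ => ?_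
      rw [hcol q]
    have hcard_univ : (((Finset.univ : Finset (Fin n)).card : ℕ) : ℝ) = n := by simp
    have hF2 : dsum - P ≤ (n:ℝ)*a*N2 - a*(s1*s1) := by
      have h7 := hTnn2
      rw [expand_aux (Finset.univ : Finset (Fin n)) a A y, hcard_univ, hD4u, hD5u] at h7
      linarith [h7]
    -- F3
    have hF3 : dsum ≤ dm * N2 := by
      have hterm : ∀ p : Fin n, p ∈ Finset.univ → d p * (y p * y p) ≤ dm * (y p * y p) := by
        intro p _
        by_cases hp : (p:ℕ) < m
        · have hple : p ≤ im1 := by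
            rw [Fin.le_def]
            show (p:ℕ) ≤ m - 1
            omega
          exact mul_le_mul_of_nonneg_right (hmono hple) (mul_self_nonneg _)
        · rw [hysupp p hp]
          simp
      calc dsum ≤ ∑ p, dm * (y p * y p) := Finset.sum_le_sum hterm
        _ = dm * N2 := by rw [← Finset.mul_sum]
    have hδdm : δ ≤ dm := by
      have h8 := hδ im1 (by show m - 1 < m; omega)
      have h9 : ∑ j ∈ S', A im1 j ≤ ∑ j, A im1 j :=
        Finset.sum_le_sum_of_subset_of_nonneg (Finset.subset_univ _)
          (fun j _ _ => hnonneg im1 j)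
      exact le_trans h8 h9
    have hCS : s1*s1 ≤ (m:ℝ)*N2 := by
      have h10 := sq_sum_le_card_mul_sum_sq (s := S') (f := y)
      have e3 : ∑ i ∈ S', y i ^ 2 = N2 := by
        rw [← hy2S]; exact Finset.sum_congr rfl fun i _ => by ring
      rw [hyS, e3] at h10
      calc s1*s1 = s1^2 := by ring
        _ ≤ ((S'.card : ℕ) : ℝ) * N2 := h10
        _ = (m:ℝ)*N2 := by rw [hcardS]
    -- expansions of the quadratic form
    have hLpq : ∀ p q, L p q = (if p = q then d p else 0) - A p q := by
      intro p q
      rw [hLdef, Matrix.sub_apply, Matrix.diagonal_apply]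
    have hinner1 : ∀ p, ∑ q, L p q * x q = d p * x p - ∑ q, A p q * x q := by
      intro p
      calc ∑ q, L p q * x q = ∑ q, ((if p = q then d p * x q else 0) - A p q * x q) :=
            Finset.sum_congr rfl fun q _ => by rw [hLpq p q]; split_ifs <;> ring
        _ = (∑ q, if p = q then d p * x q else 0) - ∑ q, A p q * x q := Finset.sum_sub_distrib _ _
        _ = d p * x p - ∑ q, A p q * x q := by rw [Finset.sum_ite_eq]; simp
    have hE1 : ∑ p, x p * (∑ q, L p q * x q)
        = (∑ p, d p * (x p * x p)) - ∑ p, ∑ q, A p q * (x p * x q) := by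
      calc ∑ p, x p * (∑ q, L p q * x q)
          = ∑ p, (d p * (x p * x p) - ∑ q, A p q * (x p * x q)) := by
            refine Finset.sum_congr rfl fun p _ => ?_
            rw [hinner1 p, mul_sub, Finset.mul_sum]
            congr 1
            · ring
            · exact Finset.sum_congr rfl fun q _ => by ring
        _ = _ := Finset.sum_sub_distrib _ _
    have hdx : ∑ p, d p * (x p * x p)
        = dsum + (2*c0)*(∑ p, d p * y p) + (c0*c0)*(∑ p, d p) := by
      calc ∑ p, d p * (x p * x p)
          = ∑ p, (d p * (y p * y p) + (2*c0)*(d p * y p) + (c0*c0)*(d p)) :=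
            Finset.sum_congr rfl fun p _ => by rw [hxy p]; ring
        _ = _ := by
            rw [Finset.sum_add_distrib, Finset.sum_add_distrib, ← Finset.mul_sum, ← Finset.mul_sum]
    have hswap2 : ∑ p, ∑ q, A p q * y q = ∑ q, d q * y q := by
      rw [Finset.sum_comm]
      refine Finset.sum_congr rfl fun q _ => ?_
      rw [← Finset.sum_mul, hcol q]
    have hAxxinner : ∀ p, ∑ q, A p q * (x p * x q)
        = (∑ q, A p q * (y p * y q)) + (c0*y p)*(∑ q, A p q) + c0*(∑ q, A p q * y q)
          + (c0*c0)*(∑ q, A p q) := by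
      intro p
      calc ∑ q, A p q * (x p * x q)
          = ∑ q, (A p q * (y p * y q) + (c0*y p)*(A p q) + c0*(A p q * y q)
              + (c0*c0)*(A p q)) :=
            Finset.sum_congr rfl fun q _ => by rw [hxy p, hxy q]; ring
        _ = _ := by
            rw [Finset.sum_add_distrib, Finset.sum_add_distrib, Finset.sum_add_distrib,
              ← Finset.mul_sum, ← Finset.mul_sum, ← Finset.mul_sum]
    have hAxx : ∑ p, ∑ q, A p q * (x p * x q)
        = P + (2*c0)*(∑ p, d p * y p) + (c0*c0)*(∑ p, d p) := by
      calc ∑ p, ∑ q, A p q * (x p * x q)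
          = ∑ p, ((∑ q, A p q * (y p * y q)) + (c0*y p)*(d p) + c0*(∑ q, A p q * y q)
              + (c0*c0)*(d p)) :=
            Finset.sum_congr rfl fun p _ => hAxxinner p
        _ = P + (∑ p, (c0*y p)*(d p)) + c0*(∑ p, ∑ q, A p q * y q) + (c0*c0)*(∑ p, d p) := by
            rw [Finset.sum_add_distrib, Finset.sum_add_distrib, Finset.sum_add_distrib,
              ← Finset.mul_sum, ← Finset.mul_sum]
        _ = P + (∑ p, (c0*y p)*(d p)) + c0*(∑ q, d q * y q) + (c0*c0)*(∑ p, d p) := by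
            rw [hswap2]
        _ = _ := by
            have e1 : ∑ p, (c0*y p)*(d p) = c0*(∑ p, d p * y p) := by
              rw [Finset.mul_sum]
              exact Finset.sum_congr rfl fun p _ => by ring
            rw [e1]
            ring
    have hxLx2 : ∑ p, x p * (∑ q, L p q * x q) = dsum - P := by
      rw [hE1, hdx, hAxx]; ring
    have hxx2 : ∑ p, x p * x p = N2 + (2*c0)*s1 + (n:ℝ)*(c0*c0) := by
      calc ∑ p, x p * x p
          = ∑ p, (y p * y p + (2*c0)*(y p) + (c0*c0)) :=
            Finset.sum_congr rfl fun p _ => by rw [hxy p]; ring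
        _ = _ := by
            rw [Finset.sum_add_distrib, Finset.sum_add_distrib, ← Finset.mul_sum,
              Finset.sum_const, Finset.card_univ, Fintype.card_fin, nsmul_eq_mul]
    rw [hxLx2, hxx2]
    have hma : (0:ℝ) ≤ (m:ℝ)*a := mul_nonneg (by positivity) ha0
    have hK0 : (0:ℝ) ≤ K := by rw [hK]; linarith [hδdm, hma]
    have hnm : (m:ℝ) ≤ (n:ℝ) := by exact_mod_cast hmn.le
    have hn0 : (0:ℝ) < (n:ℝ) := by
      have h0n : 0 < n := by omega
      exact_mod_cast h0n
    have hN2n : (0:ℝ) ≤ N2 := Finset.sum_nonneg fun p _ => mul_self_nonneg _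
    have hkey : (n:ℝ)*(dsum - P) ≤ K*((n:ℝ)*N2 - s1*s1) := by
      rcases le_or_gt K ((n:ℝ)*a) with hcc | hcc
      · have h5 : dsum - P ≤ K*N2 - a*(s1*s1) := by
          rw [hK]; linarith [hF1, hF3]
        have hA1 : (n:ℝ)*(dsum-P) ≤ (n:ℝ)*(K*N2 - a*(s1*s1)) :=
          mul_le_mul_of_nonneg_left h5 hn0.le
        have hA2 : K*(s1*s1) ≤ ((n:ℝ)*a)*(s1*s1) :=
          mul_le_mul_of_nonneg_right hcc (mul_self_nonneg s1)
        linarith [hA1, hA2]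
      · have hge : (0:ℝ) ≤ (n:ℝ)*N2 - s1*s1 := by
          have hmn2 : (m:ℝ)*N2 ≤ (n:ℝ)*N2 := mul_le_mul_of_nonneg_right hnm hN2n
          linarith [hCS, hmn2]
        have hB1 : (n:ℝ)*(dsum - P) ≤ (n:ℝ)*((n:ℝ)*a*N2 - a*(s1*s1)) :=
          mul_le_mul_of_nonneg_left hF2 hn0.le
        have hB2 : ((n:ℝ)*a)*((n:ℝ)*N2 - s1*s1) ≤ K*((n:ℝ)*N2 - s1*s1) :=
          mul_le_mul_of_nonneg_right hcc.le hge
        linarith [hB1, hB2]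
    have hsq : (0:ℝ) ≤ K*(((n:ℝ)*c0 + s1)*((n:ℝ)*c0 + s1)) :=
      mul_nonneg hK0 (mul_self_nonneg _)
    have hfin : (n:ℝ)*(dsum - P) ≤ (n:ℝ)*(K*(N2 + (2*c0)*s1 + (n:ℝ)*(c0*c0))) := by
      linarith [hkey, hsq]
    exact le_of_mul_le_mul_left hfin hn0
  exact absurd hup (not_le.mpr hlow)

end WeightedLap

open Finset in
/-- Weighted upper bound: `λ_{m+1}(G) ≤ d_m + m·a - δ(G_{S_m})`, where `a` is the maximal
edge weight and `G_{S_m}` is the subgraph induced on the `m` vertices of smallest degree. -/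
theorem weighted_lap_eigenvalue_upper_bound (n m : ℕ) (hm : 1 ≤ m) (hmn : m ≤ n - 1)
    (A : Matrix (Fin n) (Fin n) ℝ) (hsymm : A.IsSymm)
    (hnonneg : ∀ i j, 0 ≤ A i j) (hdiag : ∀ i, A i i = 0)
    (hmono : Monotone (fun i : Fin n => ∑ j, A i j))
    (a : ℝ) (ha : IsGreatest {x : ℝ | ∃ i j, A i j = x} a)
    (eigs : Fin n → ℝ) (heigs : Monotone eigs)
    (hroots : (Matrix.diagonal (fun i => ∑ j, A i j) - A).charpoly.roots
      = Finset.univ.val.map eigs) :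
    eigs ⟨m, by omega⟩ ≤ (∑ j, A ⟨m - 1, by omega⟩ j) + m * a -
      (Finset.univ.filter (fun i : Fin n => i.val ≤ m - 1)).inf'
        ⟨⟨m - 1, by omega⟩, by simp⟩
        (fun i => ∑ j ∈ Finset.univ.filter (fun j : Fin n => j.val ≤ m - 1), A i j) := by
  have hmn' : m < n := by omega
  have hfil : (Finset.univ.filter (fun j : Fin n => j.val ≤ m - 1))
      = Finset.univ.filter (fun j : Fin n => (j : ℕ) < m) := by
    ext j; simp; omega
  exact aux_main n m hm hmn' A hsymm hnonneg hdiag hmono a ha eigs heigs hroots _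
    (by
      intro i hi
      have hmem : i ∈ Finset.univ.filter (fun j : Fin n => j.val ≤ m - 1) := by
        simp; omega
      have h := Finset.inf'_le
        (f := fun i : Fin n =>
          ∑ j ∈ Finset.univ.filter (fun j : Fin n => j.val ≤ m - 1), A i j) hmem
      have hsumeq : ∑ j ∈ Finset.univ.filter (fun j : Fin n => j.val ≤ m - 1), A i j
          = ∑ j ∈ Finset.univ.filter (fun j : Fin n => (j : ℕ) < m), A i j := by
        rw [hfil]
      exact le_trans h (le_of_eq hsumeq))
end

section
/- Let G be a finite simple graph on n ≥ 2 vertices that is not the disjoint union K_2 + (n−2)K_1 of a single edge with n−2 isolated vertices. Then the second largest Laplacian eigenvalue satisfies λ_{n−1}(G) ≥ d_{n−1}(G), where d_{n−1}(G) is the second largest vertex degree of G. -/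
open Matrix Polynomial

lemma charpoly_conj_aux_s12 {m : ℕ} (V W D : Matrix (Fin m) (Fin m) ℝ)
    (h1 : W * V = 1) (h2 : V * W = 1) :
    (V * D * W).charpoly = D.charpoly := by
  have hmap : ∀ M N : Matrix (Fin m) (Fin m) ℝ, (M * N).map (C : ℝ →+* ℝ[X]) =
      M.map C * N.map C := fun M N => Matrix.map_mul
  have hone : (1 : Matrix (Fin m) (Fin m) ℝ).map (C : ℝ →+* ℝ[X]) = 1 :=
    Matrix.map_one _ (map_zero _) (map_one _)
  have key : charmatrix (V * D * W) = (V.map C) * charmatrix D * (W.map C) := by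
    rw [charmatrix, charmatrix, Matrix.mul_sub, Matrix.sub_mul]
    congr 1
    · have hc : V.map (C : ℝ →+* ℝ[X]) * (scalar (Fin m) X) = (scalar (Fin m) X) * V.map C :=
        (scalar_commute X (fun r => Commute.all X r) (V.map C)).eq.symm
      rw [hc, mul_assoc, ← hmap, h2, hone, mul_one]
    · rw [RingHom.mapMatrix_apply, RingHom.mapMatrix_apply, hmap (V * D) W, hmap V D]
  have hdet : (V.map (C : ℝ →+* ℝ[X])).det * (W.map C).det = 1 := by
    rw [mul_comm, ← det_mul, ← hmap, h1, hone, det_one]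
  rw [Matrix.charpoly, key, det_mul, det_mul, Matrix.charpoly]
  calc (V.map (C : ℝ →+* ℝ[X])).det * (charmatrix D).det * (W.map C).det
      = (V.map (C : ℝ →+* ℝ[X])).det * (W.map C).det * (charmatrix D).det := by ring
    _ = (charmatrix D).det := by rw [hdet, one_mul]
open Matrix Polynomial

lemma charpoly_diagonal_real {m : ℕ} (f : Fin m → ℝ) :
    (Matrix.diagonal f).charpoly = ∏ i : Fin m, (X - C (f i)) := by
  have hbt : (Matrix.diagonal f).BlockTriangular id := by
    intro i j h
    exact Matrix.diagonal_apply_ne f (ne_of_gt h)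
  rw [Matrix.charpoly_of_upperTriangular _ hbt]
  simp [Matrix.diagonal_apply_eq]

lemma roots_charpoly_diagonal_real {m : ℕ} (f : Fin m → ℝ) :
    (Matrix.diagonal f).charpoly.roots = Finset.univ.val.map f := by
  rw [charpoly_diagonal_real]
  have : (∏ i : Fin m, (X - C (f i))) = ((Finset.univ.val.map f).map fun a => X - C a).prod := by
    rw [Multiset.map_map]
    rfl
  rw [this, Polynomial.roots_multiset_prod_X_sub_C]

lemma roots_charpoly_hermitian {m : ℕ} {A : Matrix (Fin m) (Fin m) ℝ} (hA : A.IsHermitian) :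
    A.charpoly.roots = Finset.univ.val.map hA.eigenvalues := by
  have h1 : A.charpoly = (Matrix.diagonal ((RCLike.ofReal : ℝ → ℝ) ∘ hA.eigenvalues)).charpoly := by
    conv_lhs => rw [hA.spectral_theorem, Unitary.conjStarAlgAut_apply]
    apply charpoly_conj_aux_s12
    · exact Unitary.coe_star_mul_self _
    · exact Unitary.coe_mul_star_self _
  have h2 : (RCLike.ofReal : ℝ → ℝ) ∘ hA.eigenvalues = hA.eigenvalues := by
    funext i; simp
  rw [h1, h2, roots_charpoly_diagonal_real]


lemma key_two_eigs {m : ℕ} {A : Matrix (Fin m) (Fin m) ℝ} (hA : A.IsHermitian)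
    (hPSD : A.PosSemidef) (t : ℝ) (u v : Fin m) (huv : u ≠ v)
    (hindep : ∀ α β : ℝ, (∀ w, α * A w u + β * A w v = 0) → α = 0 ∧ β = 0)
    (hquad : ∀ α β : ℝ,
      t * (α^2 * A u u + 2*(α*β) * A u v + β^2 * A v v) ≤
        ∑ w, (α * A w u + β * A w v)^2) :
    2 ≤ Multiset.countP (fun x => t ≤ x) (Finset.univ.val.map hA.eigenvalues) := by
  classical
  set ev := hA.eigenvalues with hev
  by_contra hcon
  push_neg at hcon
  -- translate countP to a Finset card
  rw [Multiset.countP_map] at hcon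
  set S : Finset (Fin m) := Finset.univ.filter (fun i => t ≤ ev i) with hS
  have hcard : S.card ≤ 1 := by
    have : Multiset.card (Multiset.filter (fun a => t ≤ ev a) Finset.univ.val) = S.card := rfl
    omega
  -- unitary diagonalization
  set U : Matrix (Fin m) (Fin m) ℝ := (hA.eigenvectorUnitary : Matrix (Fin m) (Fin m) ℝ) with hU
  set sU : Matrix (Fin m) (Fin m) ℝ := star U with hsUdef
  have hUs : sU * U = 1 := Unitary.coe_star_mul_self _
  have hsU : U * sU = 1 := Unitary.coe_mul_star_self _
  have hofreal : (RCLike.ofReal : ℝ → ℝ) ∘ ev = ev := by funext i; simp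
  have hdiag : sU * A * U = Matrix.diagonal ev := by
    have := hA.conjStarAlgAut_star_eigenvectorUnitary
    rw [Unitary.conjStarAlgAut_apply, Unitary.coe_star, star_star, hofreal] at this
    exact this
  have hAeq : A = U * Matrix.diagonal ev * sU := by
    rw [← hdiag]
    calc A = (U * sU) * A * (U * sU) := by rw [hsU, Matrix.one_mul, Matrix.mul_one]
      _ = U * (sU * A * U) * sU := by simp only [Matrix.mul_assoc]
  -- choose α β
  have hne : Nonempty (Fin m) := ⟨u⟩
  have : ∃ α β : ℝ, ¬(α = 0 ∧ β = 0) ∧ ∀ i ∈ S, α * sU i u + β * sU i v = 0 := by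
    obtain ⟨i₀, hi₀⟩ := Finset.card_le_one_iff_subset_singleton.mp hcard
    by_cases hPQ : sU i₀ u = 0 ∧ sU i₀ v = 0
    · exact ⟨1, 0, by simp, fun i hi => by
        have : i = i₀ := Finset.mem_singleton.mp (hi₀ hi)
        subst this; rw [hPQ.1, hPQ.2]; ring⟩
    · refine ⟨sU i₀ v, -(sU i₀ u), ?_, fun i hi => ?_⟩
      · intro ⟨h1, h2⟩; exact hPQ ⟨by linarith [neg_eq_zero.mp h2], h1⟩
      · have : i = i₀ := Finset.mem_singleton.mp (hi₀ hi)
        subst this; ring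
  obtain ⟨α, β, hαβ, hy0⟩ := this
  -- the test vector and its transform
  set x : Fin m → ℝ := α • (Pi.single u (1:ℝ) : Fin m → ℝ) + β • (Pi.single v 1 : Fin m → ℝ) with hx
  set y : Fin m → ℝ := sU *ᵥ x with hy
  have hyi : ∀ i, y i = α * sU i u + β * sU i v := by
    intro i
    simp [hy, hx, Matrix.mulVec_add, Matrix.mulVec_smul, Matrix.mulVec_single, mul_comm]
  have hAx : A *ᵥ x = fun w => α * A w u + β * A w v := by
    funext w
    simp [hx, Matrix.mulVec_add, Matrix.mulVec_smul, Matrix.mulVec_single, mul_comm]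
  -- quadratic form identities
  have hDy : ∀ z : Fin m → ℝ, Matrix.diagonal ev *ᵥ z = fun i => ev i * z i := by
    intro z; funext i; simp [Matrix.mulVec_diagonal]
  have hxAx : x ⬝ᵥ (A *ᵥ x) = ∑ i, ev i * (y i)^2 := by
    conv_lhs => rw [hAeq]
    rw [← Matrix.mulVec_mulVec, ← Matrix.mulVec_mulVec]
    rw [Matrix.dotProduct_mulVec x U]
    have hvm : x ᵥ* U = sU *ᵥ x := by
      rw [hsUdef, show star U = Uᵀ from rfl, Matrix.mulVec_transpose]
    rw [hvm, ← hy, hDy]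
    simp only [dotProduct]
    exact Finset.sum_congr rfl (fun i _ => by ring)
  have hAxAx : (A *ᵥ x) ⬝ᵥ (A *ᵥ x) = ∑ i, (ev i)^2 * (y i)^2 := by
    have hAx2 : A *ᵥ x = U *ᵥ (Matrix.diagonal ev *ᵥ y) := by
      conv_lhs => rw [hAeq]
      rw [← Matrix.mulVec_mulVec, ← Matrix.mulVec_mulVec, ← hy]
    rw [hAx2]
    have huu : ∀ z : Fin m → ℝ, (U *ᵥ z) ⬝ᵥ (U *ᵥ z) = z ⬝ᵥ z := by
      intro z
      rw [Matrix.dotProduct_mulVec (U *ᵥ z) U]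
      have : (U *ᵥ z) ᵥ* U = sU *ᵥ (U *ᵥ z) := by
        rw [hsUdef, show star U = Uᵀ from rfl, Matrix.mulVec_transpose]
      rw [this, Matrix.mulVec_mulVec, hUs, Matrix.one_mulVec]
    rw [huu, hDy]
    simp only [dotProduct]
    exact Finset.sum_congr rfl (fun i _ => by ring)
  -- collect the inequality
  have hxAx' : x ⬝ᵥ (A *ᵥ x) = α^2 * A u u + 2*(α*β) * A u v + β^2 * A v v := by
    rw [hAx]
    have hsymm : A v u = A u v := by
      have := congrFun (congrFun hA v) u
      simpa using this.symm
    simp only [dotProduct, hx, Pi.add_apply, Pi.smul_apply, smul_eq_mul, Pi.single_apply]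
    simp only [mul_ite, ite_mul, mul_one, mul_zero, zero_mul, one_mul, add_mul,
      Finset.sum_add_distrib, Finset.sum_ite_eq', Finset.mem_univ, if_true]
    rw [hsymm]
    ring
  have hAx2sum : (A *ᵥ x) ⬝ᵥ (A *ᵥ x) = ∑ w, (α * A w u + β * A w v)^2 := by
    rw [hAx]
    simp only [dotProduct]
    exact Finset.sum_congr rfl (fun i _ => (sq _).symm)
  -- the contradiction
  have hmain := hquad α β
  rw [← hxAx', hxAx, ← hAx2sum, hAxAx] at hmain
  have hsum : 0 ≤ ∑ i, ev i * (ev i - t) * (y i)^2 := by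
    have : ∑ i, ev i * (ev i - t) * (y i)^2
        = ∑ i, (ev i)^2 * (y i)^2 - t * ∑ i, ev i * (y i)^2 := by
      rw [Finset.mul_sum, ← Finset.sum_sub_distrib]
      exact Finset.sum_congr rfl (fun i _ => by ring)
    rw [this]
    linarith
  have hterm : ∀ i ∈ Finset.univ, ev i * (ev i - t) * (y i)^2 ≤ 0 := by
    intro i _
    by_cases hiS : i ∈ S
    · have := hy0 i hiS
      rw [hyi i] at *
      rw [this]
      ring_nf
      simp [this]
    · have hlt : ev i < t := by
        by_contra hge
        exact hiS (by simp [hS]; linarith)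
      have hnn : 0 ≤ ev i := hPSD.eigenvalues_nonneg i
      have : ev i * (ev i - t) ≤ 0 := mul_nonpos_of_nonneg_of_nonpos hnn (by linarith)
      exact mul_nonpos_of_nonpos_of_nonneg this (sq_nonneg _)
  have hzero : ∀ i ∈ Finset.univ, ev i * (ev i - t) * (y i)^2 = 0 := by
    rw [← Finset.sum_eq_zero_iff_of_nonpos hterm]
    exact le_antisymm (Finset.sum_nonpos hterm) hsum
  have hsq : ∀ i, (ev i)^2 * (y i)^2 = 0 := by
    intro i
    by_cases hiS : i ∈ S
    · have := hy0 i hiS; rw [← hyi i] at this; rw [this]; ring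
    · have h0 := hzero i (Finset.mem_univ i)
      rcases mul_eq_zero.mp h0 with h1 | h2
      · rcases mul_eq_zero.mp h1 with h3 | h4
        · rw [h3]; ring
        · have : ev i = t := by linarith [sub_eq_zero.mp h4]
          exact absurd (by simp [hS]; linarith) hiS
      · rw [h2]; ring
  have hAx0 : ∀ w, α * A w u + β * A w v = 0 := by
    have hsum0 : ∑ w, (α * A w u + β * A w v)^2 = 0 := by
      rw [← hAx2sum, hAxAx]
      exact Finset.sum_eq_zero (fun i _ => hsq i)
    intro w
    have := (Finset.sum_eq_zero_iff_of_nonneg (fun i _ => sq_nonneg _)).mp hsum0 w (Finset.mem_univ w)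
    exact pow_eq_zero_iff (by norm_num) |>.mp this
  exact hαβ (hindep α β hAx0)


variable {n : ℕ} (G : SimpleGraph (Fin n)) [DecidableRel G.Adj]

lemma lap_entry (w u : Fin n) : G.lapMatrix ℝ w u =
    (if w = u then (G.degree u : ℝ) else 0) - (if G.Adj w u then 1 else 0) := by
  simp only [SimpleGraph.lapMatrix, SimpleGraph.degMatrix, Matrix.sub_apply,
    Matrix.diagonal_apply, SimpleGraph.adjMatrix_apply]
  congr 1
  split
  · next h => subst h; rfl
  · rfl

lemma filter_adj_eq (u : Fin n) :
    Finset.univ.filter (fun w => G.Adj w u) = G.neighborFinset u := by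
  ext w
  simp [SimpleGraph.mem_neighborFinset, SimpleGraph.adj_comm]

lemma lap_col_sq_sum (u : Fin n) :
    ∑ w, (G.lapMatrix ℝ w u)^2 = (G.degree u : ℝ)^2 + G.degree u := by
  rw [Finset.sum_eq_add_sum_sdiff_singleton_of_mem (Finset.mem_univ u)]
  have h1 : (G.lapMatrix ℝ u u)^2 = (G.degree u : ℝ)^2 := by
    rw [lap_entry]
    simp [G.loopless.irrefl u]
  have h2 : ∑ w ∈ Finset.univ \ {u}, (G.lapMatrix ℝ w u)^2
      = ∑ w ∈ Finset.univ \ {u}, (if G.Adj w u then (1:ℝ) else 0) := by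
    apply Finset.sum_congr rfl
    intro w hw
    have hwu : w ≠ u := by simpa using (Finset.mem_sdiff.mp hw).2
    rw [lap_entry]
    simp only [hwu, if_false, zero_sub, neg_sq]
    split <;> norm_num
  rw [h1, h2, Finset.sum_boole]
  have h3 : Finset.filter (fun w => G.Adj w u) (Finset.univ \ {u}) =
      G.neighborFinset u := by
    rw [← filter_adj_eq G u]
    ext w
    simp only [Finset.mem_filter, Finset.mem_sdiff, Finset.mem_univ, Finset.mem_singleton,
      true_and]
    constructor
    · rintro ⟨_, h⟩; exact h
    · intro h
      refine ⟨?_, h⟩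
      rintro rfl
      exact G.loopless.irrefl _ h
  rw [h3]
  rfl

lemma lap_col_cross_sum (u v : Fin n) (huv : u ≠ v) :
    ∑ w, G.lapMatrix ℝ w u * G.lapMatrix ℝ w v =
      ((G.neighborFinset u ∩ G.neighborFinset v).card : ℝ)
        - (if G.Adj u v then 1 else 0) * ((G.degree u : ℝ) + G.degree v) := by
  have hvu : v ≠ u := huv.symm
  rw [Finset.sum_eq_add_sum_sdiff_singleton_of_mem (Finset.mem_univ u)]
  have hv : v ∈ Finset.univ \ {u} := by simp [hvu]
  rw [Finset.sum_eq_add_sum_sdiff_singleton_of_mem hv]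
  have e1 : G.lapMatrix ℝ u u * G.lapMatrix ℝ u v
      = -(if G.Adj u v then 1 else 0) * (G.degree u : ℝ) := by
    rw [lap_entry, lap_entry]
    simp [huv, G.loopless.irrefl u, SimpleGraph.adj_comm]
  have e2 : G.lapMatrix ℝ v u * G.lapMatrix ℝ v v
      = -(if G.Adj u v then 1 else 0) * (G.degree v : ℝ) := by
    rw [lap_entry, lap_entry]
    simp [hvu, G.loopless.irrefl v, SimpleGraph.adj_comm]
  have e3 : ∑ w ∈ (Finset.univ \ {u}) \ {v}, G.lapMatrix ℝ w u * G.lapMatrix ℝ w v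
      = ((G.neighborFinset u ∩ G.neighborFinset v).card : ℝ) := by
    have : ∀ w ∈ (Finset.univ \ {u}) \ {v}, G.lapMatrix ℝ w u * G.lapMatrix ℝ w v
        = if (G.Adj w u ∧ G.Adj w v) then (1:ℝ) else 0 := by
      intro w hw
      simp only [Finset.mem_sdiff, Finset.mem_singleton, Finset.mem_univ, true_and] at hw
      rw [lap_entry, lap_entry]
      simp only [hw.1, hw.2, if_false, zero_sub, neg_mul_neg]
      by_cases h1 : G.Adj w u <;> by_cases h2 : G.Adj w v <;> simp [h1, h2]
    rw [Finset.sum_congr rfl this, Finset.sum_boole]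
    have hset : Finset.filter (fun w => G.Adj w u ∧ G.Adj w v) ((Finset.univ \ {u}) \ {v})
        = G.neighborFinset u ∩ G.neighborFinset v := by
      ext w
      simp only [Finset.mem_filter, Finset.mem_sdiff, Finset.mem_singleton, Finset.mem_univ,
        true_and, Finset.mem_inter, SimpleGraph.mem_neighborFinset]
      constructor
      · rintro ⟨⟨_, _⟩, h1, h2⟩
        exact ⟨h1.symm, h2.symm⟩
      · rintro ⟨h1, h2⟩
        refine ⟨⟨?_, ?_⟩, h1.symm, h2.symm⟩
        · rintro rfl; exact G.loopless.irrefl _ h1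
        · rintro rfl; exact G.loopless.irrefl _ h2
    rw [hset]
  rw [e1, e2, e3]
  ring

lemma psd2 (a b c : ℝ) (ha : 0 ≤ a) (hc : 0 ≤ c) (hb : b^2 ≤ a*c) (α β : ℝ) :
    0 ≤ a*α^2 + 2*b*(α*β) + c*β^2 := by
  rcases eq_or_lt_of_le ha with h|h
  · have hb0 : b = 0 := by nlinarith [sq_nonneg b]
    rw [hb0, ← h]
    nlinarith [sq_nonneg β]
  · nlinarith [sq_nonneg (a*α + b*β), mul_nonneg (sub_nonneg.mpr hb) (sq_nonneg β)]

lemma bound_nonadj (t du dv c : ℝ) (h1 : 1 ≤ t) (h2 : t ≤ du) (h3 : t ≤ dv)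
    (h4 : 0 ≤ c) (h5 : c ≤ du) (h6 : c ≤ dv) :
    c^2 ≤ (du^2 + du - t*du) * (dv^2 + dv - t*dv) := by
  have hA : du ≤ du^2 + du - t*du := by nlinarith
  have hC : dv ≤ dv^2 + dv - t*dv := by nlinarith
  have hcc : c^2 ≤ du*dv := by nlinarith
  have : du*dv ≤ (du^2 + du - t*du) * (dv^2 + dv - t*dv) := by
    apply mul_le_mul hA hC (by linarith) (by nlinarith)
  linarith

lemma bound_adj (t du dv c : ℝ) (h1 : 1 ≤ t) (h2 : t ≤ du) (h3 : t ≤ dv)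
    (h4 : 0 ≤ c) (h5 : c+1 ≤ du) (h6 : c+1 ≤ dv) :
    (c - (du+dv) + t)^2 ≤ (du^2 + du - t*du) * (dv^2 + dv - t*dv) := by
  have k1 : du + dv - t ≤ du*(dv+1-t) := by nlinarith
  have k2 : du + dv - t ≤ dv*(du+1-t) := by nlinarith
  have k0 : 0 < du + dv - t := by linarith
  have kp : (du+dv-t)^2 ≤ (du*(dv+1-t))*(dv*(du+1-t)) := by
    have := mul_le_mul k1 k2 (le_of_lt k0) (by nlinarith)
    nlinarith [this]
  have hBneg : c - (du+dv) + t ≤ 0 := by linarith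
  have hBge : -(du+dv-t) ≤ c - (du+dv) + t := by linarith
  nlinarith [kp]

lemma quad_ineq (u v : Fin n) (huv : u ≠ v) (t : ℕ) (ht1 : 1 ≤ t)
    (htu : t ≤ G.degree u) (htv : t ≤ G.degree v) (α β : ℝ) :
    (t:ℝ) * (α^2 * G.lapMatrix ℝ u u + 2*(α*β) * G.lapMatrix ℝ u v
        + β^2 * G.lapMatrix ℝ v v) ≤
      ∑ w, (α * G.lapMatrix ℝ w u + β * G.lapMatrix ℝ w v)^2 := by
  set du : ℝ := (G.degree u : ℝ) with hdu
  set dv : ℝ := (G.degree v : ℝ) with hdv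
  set c : ℝ := ((G.neighborFinset u ∩ G.neighborFinset v).card : ℝ) with hc
  set e : ℝ := (if G.Adj u v then (1:ℝ) else 0) with he
  have hAuu : G.lapMatrix ℝ u u = du := by rw [lap_entry]; simp [G.loopless.irrefl u, hdu]
  have hAvv : G.lapMatrix ℝ v v = dv := by rw [lap_entry]; simp [G.loopless.irrefl v, hdv]
  have hAuv : G.lapMatrix ℝ u v = -e := by
    rw [lap_entry, he]; simp [huv]
  have hexp : ∑ w, (α * G.lapMatrix ℝ w u + β * G.lapMatrix ℝ w v)^2
      = α^2 * (du^2 + du) + 2*(α*β) * (c - e*(du+dv)) + β^2 * (dv^2 + dv) := by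
    have h1 : ∀ w ∈ Finset.univ, (α * G.lapMatrix ℝ w u + β * G.lapMatrix ℝ w v)^2
        = α^2*(G.lapMatrix ℝ w u)^2 + 2*(α*β)*(G.lapMatrix ℝ w u * G.lapMatrix ℝ w v)
          + β^2*(G.lapMatrix ℝ w v)^2 := fun w _ => by ring
    rw [Finset.sum_congr rfl h1]
    rw [Finset.sum_add_distrib, Finset.sum_add_distrib, ← Finset.mul_sum, ← Finset.mul_sum,
      ← Finset.mul_sum, lap_col_sq_sum, lap_col_sq_sum, lap_col_cross_sum G u v huv]
  rw [hAuu, hAvv, hAuv, hexp]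
  have key : 0 ≤ (du^2 + du - t*du)*α^2
      + 2*(c - e*(du+dv) + t*e)*(α*β) + (dv^2 + dv - t*dv)*β^2 := by
    have htu' : (t:ℝ) ≤ du := by rw [hdu]; exact_mod_cast htu
    have htv' : (t:ℝ) ≤ dv := by rw [hdv]; exact_mod_cast htv
    have ht1' : (1:ℝ) ≤ (t:ℝ) := by exact_mod_cast ht1
    have hc0 : 0 ≤ c := by rw [hc]; positivity
    apply psd2 _ _ _ (by nlinarith) (by nlinarith)
    · by_cases hadj : G.Adj u v
      · have he1 : e = 1 := by rw [he, if_pos hadj]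
        have hcu : c + 1 ≤ du := by
          rw [hc, hdu]
          have : (G.neighborFinset u ∩ G.neighborFinset v).card + 1 ≤ G.degree u := by
            have hsub : insert v (G.neighborFinset u ∩ G.neighborFinset v) ⊆ G.neighborFinset u := by
              intro w hw
              rcases Finset.mem_insert.mp hw with h | hw'
              · rw [h]; exact (G.mem_neighborFinset u v).mpr hadj
              · exact (Finset.mem_inter.mp hw').1
            have hvnot : v ∉ G.neighborFinset u ∩ G.neighborFinset v := by
              intro hmem
              exact G.loopless.irrefl v ((G.mem_neighborFinset v v).mp (Finset.mem_inter.mp hmem).2)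
            calc (G.neighborFinset u ∩ G.neighborFinset v).card + 1
                = (insert v (G.neighborFinset u ∩ G.neighborFinset v)).card := by
                  rw [Finset.card_insert_of_notMem hvnot]
              _ ≤ (G.neighborFinset u).card := Finset.card_le_card hsub
          exact_mod_cast this
        have hcv : c + 1 ≤ dv := by
          rw [hc, hdv]
          have : (G.neighborFinset u ∩ G.neighborFinset v).card + 1 ≤ G.degree v := by
            have hsub : insert u (G.neighborFinset u ∩ G.neighborFinset v) ⊆ G.neighborFinset v := by
              intro w hw
              rcases Finset.mem_insert.mp hw with h | hw'
              · rw [h]; exact (G.mem_neighborFinset v u).mpr hadj.symm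
              · exact (Finset.mem_inter.mp hw').2
            have hunot : u ∉ G.neighborFinset u ∩ G.neighborFinset v := by
              intro hmem
              exact G.loopless.irrefl u ((G.mem_neighborFinset u u).mp (Finset.mem_inter.mp hmem).1)
            calc (G.neighborFinset u ∩ G.neighborFinset v).card + 1
                = (insert u (G.neighborFinset u ∩ G.neighborFinset v)).card := by
                  rw [Finset.card_insert_of_notMem hunot]
              _ ≤ (G.neighborFinset v).card := Finset.card_le_card hsub
          exact_mod_cast this
        rw [he1]
        have := bound_adj (t:ℝ) du dv c ht1' htu' htv' hc0 hcu hcv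
        calc (c - 1*(du+dv) + t*1)^2 = (c - (du+dv) + (t:ℝ))^2 := by ring
          _ ≤ _ := this
      · have he0 : e = 0 := by rw [he, if_neg hadj]
        have hcu : c ≤ du := by
          rw [hc, hdu]
          exact_mod_cast Finset.card_le_card (Finset.inter_subset_left)
        have hcv : c ≤ dv := by
          rw [hc, hdv]
          exact_mod_cast Finset.card_le_card (Finset.inter_subset_right)
        rw [he0]
        have := bound_nonadj (t:ℝ) du dv c ht1' htu' htv' hc0 hcu hcv
        calc (c - 0*(du+dv) + t*0)^2 = c^2 := by ring
          _ ≤ _ := this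
  nlinarith [key]

lemma indep_lemma (u v : Fin n) (huv : u ≠ v) (hdu : 1 ≤ G.degree u) (hdv : 1 ≤ G.degree v)
    (hprod : G.Adj u v → 2 ≤ G.degree u * G.degree v) (α β : ℝ)
    (h : ∀ w, α * G.lapMatrix ℝ w u + β * G.lapMatrix ℝ w v = 0) : α = 0 ∧ β = 0 := by
  have hu := h u
  have hv := h v
  have hAuu : G.lapMatrix ℝ u u = (G.degree u : ℝ) := by rw [lap_entry]; simp [G.loopless.irrefl u]
  have hAvv : G.lapMatrix ℝ v v = (G.degree v : ℝ) := by rw [lap_entry]; simp [G.loopless.irrefl v]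
  by_cases hadj : G.Adj u v
  · have hAuv : G.lapMatrix ℝ u v = -1 := by rw [lap_entry]; simp [huv, hadj]
    have hAvu : G.lapMatrix ℝ v u = -1 := by rw [lap_entry]; simp [huv.symm, hadj.symm]
    rw [hAuu, hAuv] at hu
    rw [hAvu, hAvv] at hv
    have h2 : (2:ℝ) ≤ (G.degree u : ℝ) * (G.degree v : ℝ) := by exact_mod_cast hprod hadj
    constructor
    · nlinarith [hu, hv, h2]
    · nlinarith [hu, hv, h2]
  · have hAuv : G.lapMatrix ℝ u v = 0 := by rw [lap_entry]; simp [huv, hadj]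
    have hAvu : G.lapMatrix ℝ v u = 0 := by
      rw [lap_entry]
      have hnadj : ¬ G.Adj v u := fun h' => hadj (G.adj_symm h')
      simp [huv.symm, hnadj]
    rw [hAuu, hAuv] at hu
    rw [hAvu, hAvv] at hv
    have hdu' : (1:ℝ) ≤ (G.degree u : ℝ) := by exact_mod_cast hdu
    have hdv' : (1:ℝ) ≤ (G.degree v : ℝ) := by exact_mod_cast hdv
    constructor
    · have h0 : α * (G.degree u : ℝ) = 0 := by linarith
      rcases mul_eq_zero.mp h0 with h'|h'
      · exact h'
      · linarith
    · have h0 : β * (G.degree v : ℝ) = 0 := by linarith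
      rcases mul_eq_zero.mp h0 with h'|h'
      · exact h'
      · linarith

lemma count_ge_two_mono (hn : 2 ≤ n) (d : Fin n → ℕ) (hd : Monotone d) :
    2 ≤ Multiset.countP (fun k => d ⟨n-2, Nat.sub_lt (by omega) two_pos⟩ ≤ k) (Finset.univ.val.map d) := by
  classical
  rw [Multiset.countP_map]
  have : Multiset.card (Multiset.filter (fun a => d ⟨n-2, by omega⟩ ≤ d a) Finset.univ.val)
      = (Finset.univ.filter (fun a => d ⟨n-2, by omega⟩ ≤ d a)).card := rfl
  rw [this]
  have hsub : ({⟨n-2, by omega⟩, ⟨n-1, by omega⟩} : Finset (Fin n))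
      ⊆ Finset.univ.filter (fun a => d ⟨n-2, by omega⟩ ≤ d a) := by
    intro w hw
    rcases Finset.mem_insert.mp hw with h | h
    · subst h; simp
    · rw [Finset.mem_singleton] at h
      subst h
      simp only [Finset.mem_filter, Finset.mem_univ, true_and]
      exact hd (by simp [Fin.le_def]; omega)
  have hcard2 : ({⟨n-2, by omega⟩, ⟨n-1, by omega⟩} : Finset (Fin n)).card = 2 := by
    rw [Finset.card_insert_of_notMem (by simp [Fin.ext_iff]; omega), Finset.card_singleton]
  calc 2 = ({⟨n-2, by omega⟩, ⟨n-1, by omega⟩} : Finset (Fin n)).card := hcard2.symm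
    _ ≤ _ := Finset.card_le_card hsub

lemma mono_real_of_count (hn : 2 ≤ n) (f : Fin n → ℝ) (hf : Monotone f) (t : ℝ)
    (h : 2 ≤ Multiset.countP (fun x => t ≤ x) (Finset.univ.val.map f)) :
    t ≤ f ⟨n-2, Nat.sub_lt (by omega) two_pos⟩ := by
  classical
  by_contra hlt
  push_neg at hlt
  rw [Multiset.countP_map] at h
  have heq : Multiset.card (Multiset.filter (fun a => t ≤ f a) Finset.univ.val)
      = (Finset.univ.filter (fun a => t ≤ f a)).card := rfl
  rw [heq] at h
  have hsub : Finset.univ.filter (fun a => t ≤ f a) ⊆ {⟨n-1, by omega⟩} := by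
    intro w hw
    simp only [Finset.mem_filter, Finset.mem_univ, true_and] at hw
    rw [Finset.mem_singleton]
    by_contra hne
    have hwle : w ≤ (⟨n-2, by omega⟩ : Fin n) := by
      have hwlt : (w : ℕ) < n := w.isLt
      have : (w : ℕ) ≠ n-1 := fun hc => hne (Fin.ext hc)
      simp [Fin.le_def]
      omega
    have := hf hwle
    linarith
  have := Finset.card_le_card hsub
  rw [Finset.card_singleton] at this
  omega

/-- `G` is (up to relabeling of vertices) the disjoint union of a complete graph on the
`r` vertices of a set `S` with the remaining vertices isolated. -/
def IsCliquePlusIsolated {V : Type*} [Fintype V] (G : SimpleGraph V) (r : ℕ) : Prop :=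
  ∃ S : Finset V, S.card = r ∧ ∀ u v : V, G.Adj u v ↔ u ≠ v ∧ u ∈ S ∧ v ∈ S

lemma select_pair (t : ℕ) (ht : 1 ≤ t)
    (hcount : 2 ≤ (Finset.univ.filter (fun w => t ≤ G.degree w)).card)
    (hnot : ¬ IsCliquePlusIsolated G 2) :
    ∃ u v : Fin n, u ≠ v ∧ t ≤ G.degree u ∧ t ≤ G.degree v ∧
      (G.Adj u v → 2 ≤ G.degree u * G.degree v) := by
  classical
  obtain ⟨u, hu, v, hv, huv⟩ := Finset.one_lt_card.mp hcount
  simp only [Finset.mem_filter, Finset.mem_univ, true_and] at hu hv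
  by_cases hadj : G.Adj u v
  · by_cases h2 : 2 ≤ G.degree u * G.degree v
    · exact ⟨u, v, huv, hu, hv, fun _ => h2⟩
    · -- degrees are both 1 and t = 1
      push_neg at h2
      have hdu1 : G.degree u = 1 := by
        have h1u : 1 ≤ G.degree u := le_trans ht hu
        have h1v : 1 ≤ G.degree v := le_trans ht hv
        nlinarith
      have hdv1 : G.degree v = 1 := by
        have h1u : 1 ≤ G.degree u := le_trans ht hu
        have h1v : 1 ≤ G.degree v := le_trans ht hv
        nlinarith
      by_cases hw : ∃ w : Fin n, w ≠ u ∧ w ≠ v ∧ 1 ≤ G.degree w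
      · obtain ⟨w, hwu, hwv, hdw⟩ := hw
        refine ⟨u, w, hwu.symm, hu, ?_, ?_⟩
        · omega
        · intro hadj'
          exfalso
          -- u has degree 1 and is adjacent to both v and w, v ≠ w
          have hv' : v ∈ G.neighborFinset u := (G.mem_neighborFinset u v).mpr hadj
          have hw' : w ∈ G.neighborFinset u := (G.mem_neighborFinset u w).mpr hadj'
          have hsub : ({v, w} : Finset (Fin n)) ⊆ G.neighborFinset u := by
            intro z hz
            rcases Finset.mem_insert.mp hz with h | h
            · rw [h]; exact hv'
            · rw [Finset.mem_singleton.mp h]; exact hw'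
          have : 2 ≤ G.degree u := by
            have hc2 : ({v, w} : Finset (Fin n)).card = 2 := by
              rw [Finset.card_insert_of_notMem (by simpa using fun h => hwv h.symm),
                Finset.card_singleton]
            calc 2 = ({v, w} : Finset (Fin n)).card := hc2.symm
              _ ≤ _ := Finset.card_le_card hsub
          omega
      · exfalso
        apply hnot
        push_neg at hw
        refine ⟨{u, v}, ?_, ?_⟩
        · rw [Finset.card_insert_of_notMem (by simpa using huv), Finset.card_singleton]
        · intro x y
          constructor
          · intro hxy
            have hx1 : 1 ≤ G.degree x := by
              rw [← SimpleGraph.card_neighborFinset_eq_degree]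
              exact Finset.card_pos.mpr ⟨y, (G.mem_neighborFinset x y).mpr hxy⟩
            have hy1 : 1 ≤ G.degree y := by
              rw [← SimpleGraph.card_neighborFinset_eq_degree]
              exact Finset.card_pos.mpr ⟨x, (G.mem_neighborFinset y x).mpr hxy.symm⟩
            refine ⟨hxy.ne, ?_, ?_⟩
            · by_contra hx
              simp only [Finset.mem_insert, Finset.mem_singleton] at hx
              push_neg at hx
              have := hw x hx.1 hx.2
              omega
            · by_contra hy
              simp only [Finset.mem_insert, Finset.mem_singleton] at hy
              push_neg at hy
              have := hw y hy.1 hy.2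
              omega
          · rintro ⟨hne, hx, hy⟩
            simp only [Finset.mem_insert, Finset.mem_singleton] at hx hy
            rcases hx with rfl | rfl <;> rcases hy with rfl | rfl
            · exact absurd rfl hne
            · exact hadj
            · exact hadj.symm
            · exact absurd rfl hne
  · exact ⟨u, v, huv, hu, hv, fun h => absurd h hadj⟩


/-- Li–Pan: if `G ≠ K_2 + (n-2)K_1`, then `λ_{n-1}(G) ≥ d_{n-1}(G)`. -/
theorem lap_second_largest_eigenvalue_ge (n : ℕ) (hn : 2 ≤ n)
    (G : SimpleGraph (Fin n)) [DecidableRel G.Adj]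
    (eigs : Fin n → ℝ) (heigs : Monotone eigs)
    (hroots : (G.lapMatrix ℝ).charpoly.roots = Finset.univ.val.map eigs)
    (d : Fin n → ℕ) (hd : Monotone d)
    (hdeg : Finset.univ.val.map d = Finset.univ.val.map (fun v => G.degree v))
    (hnot : ¬ IsCliquePlusIsolated G 2) :
    eigs ⟨n - 2, by omega⟩ ≥ (d ⟨n - 2, by omega⟩ : ℝ) := by
  classical
  have hP : (G.lapMatrix ℝ).PosSemidef := G.posSemidef_lapMatrix ℝ
  have hA : (G.lapMatrix ℝ).IsHermitian := hP.1
  suffices hsuff : ∀ pf : n - 2 < n, ((d ⟨n - 2, pf⟩ : ℕ) : ℝ) ≤ eigs ⟨n - 2, pf⟩ by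
    exact hsuff (by omega)
  intro pf
  set t : ℕ := d ⟨n - 2, pf⟩ with htdef
  rcases Nat.eq_zero_or_pos t with ht0 | ht1
  · -- second largest degree is zero: use positive semidefiniteness
    have hmem : eigs ⟨n - 2, pf⟩ ∈ Finset.univ.val.map eigs :=
      Multiset.mem_map_of_mem _ (Finset.mem_univ_val _)
    rw [← hroots, roots_charpoly_hermitian hA] at hmem
    obtain ⟨i, _, hi⟩ := Multiset.mem_map.mp hmem
    have hnn : 0 ≤ hA.eigenvalues i := hP.eigenvalues_nonneg i
    rw [ht0]
    rw [hi] at hnn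
    simpa using hnn
  · -- main case
    have hcount2 : 2 ≤ Multiset.countP (fun k => t ≤ k) (Finset.univ.val.map d) := by
      exact count_ge_two_mono hn d hd
    rw [hdeg] at hcount2
    have hfilt : 2 ≤ (Finset.univ.filter (fun w => t ≤ G.degree w)).card := by
      rw [Multiset.countP_map] at hcount2
      exact hcount2
    obtain ⟨u, v, huv, htu, htv, hprod⟩ := select_pair G t ht1 hfilt hnot
    have hdu1 : 1 ≤ G.degree u := le_trans ht1 htu
    have hdv1 : 1 ≤ G.degree v := le_trans ht1 htv
    have h2 := key_two_eigs hA hP (t : ℝ) u v huv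
      (fun α β h => indep_lemma G u v huv hdu1 hdv1 hprod α β h)
      (fun α β => quad_ineq G u v huv t ht1 htu htv α β)
    rw [← roots_charpoly_hermitian hA, hroots] at h2
    exact mono_real_of_count hn eigs heigs (t : ℝ) h2
end
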